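/- arXiv:1512.03337 — 8 statements merged into one kernel-verified Lean document; each statement's English description precedes it below -/
import Mathlib

section
/- Let n be a nonempty finite type and H : Matrix n n ℝ a real square matrix such that for every real t ≥ 0 the matrix exponential exp(t • H) is stochastic. Then H has nonnegative off-diagonal entries (H i j ≥ 0 whenever i ≠ j) and every column of H sums to zero (∑ i, H i j = 0 for every j). -/
/-- A real square matrix is stochastic if its entries are nonnegative and
each column sums to 1. -/
def IsStochastic {n : Type*} [Fintype n] (A : Matrix n n ℝ) : Prop :=
  (∀ i j, 0 ≤ A i j) ∧ ∀ j, ∑ i, A i j = 1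

attribute [local instance] Matrix.linftyOpNormedRing Matrix.linftyOpNormedAlgebra

open Filter Set Topology

/-- General principle: if a scalar function has derivative `d` at `0`, vanishes at `0`,
and the derivative is the limit of slopes from the right. -/
private lemma deriv_nonneg_aux {f : ℝ → ℝ} {d : ℝ} (hf : HasDerivAt f d 0)
    (h0 : f 0 = 0) (hnn : ∀ t : ℝ, 0 < t → 0 ≤ f t) : 0 ≤ d := by
  have hW : HasDerivWithinAt f d (Ioi 0) 0 := hf.hasDerivWithinAt
  rw [hasDerivWithinAt_iff_tendsto_slope] at hW
  rw [Set.diff_singleton_eq_self (by simp)] at hW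
  refine ge_of_tendsto hW ?_
  filter_upwards [self_mem_nhdsWithin] with t (ht : t ∈ Ioi (0:ℝ))
  have : slope f 0 t = f t / t := by
    simp [slope_def_field, h0, div_eq_inv_mul]
  rw [this]
  exact div_nonneg (hnn t ht) (le_of_lt ht)

private lemma deriv_zero_aux {f : ℝ → ℝ} {d : ℝ} (hf : HasDerivAt f d 0)
    (hc : ∀ t : ℝ, 0 < t → f t = f 0) : d = 0 := by
  have hW : HasDerivWithinAt f d (Ioi 0) 0 := hf.hasDerivWithinAt
  rw [hasDerivWithinAt_iff_tendsto_slope] at hW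
  rw [Set.diff_singleton_eq_self (by simp)] at hW
  have h0 : Tendsto (slope f 0) (𝓝[Ioi (0:ℝ)] 0) (𝓝 0) := by
    have : slope f 0 =ᶠ[𝓝[Ioi (0:ℝ)] 0] fun _ => (0:ℝ) := by
      filter_upwards [self_mem_nhdsWithin] with t (ht : t ∈ Ioi (0:ℝ))
      simp [slope_def_field, hc t ht]
    exact Tendsto.congr' this.symm tendsto_const_nhds
  exact tendsto_nhds_unique hW h0

theorem offdiag_nonneg_and_columns_sum_zero_of_exp_stochastic
    {n : Type*} [Fintype n] [DecidableEq n] [Nonempty n] (H : Matrix n n ℝ)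
    (h : ∀ t : ℝ, 0 ≤ t → IsStochastic (NormedSpace.exp (t • H))) :
    (∀ i j, i ≠ j → 0 ≤ H i j) ∧ ∀ j, ∑ i, H i j = 0 := by
  have hd : HasDerivAt (fun t : ℝ => NormedSpace.exp (t • H)) H 0 := by
    have := hasDerivAt_exp_smul_const (𝕂 := ℝ) H (0:ℝ)
    simp only [zero_smul, NormedSpace.exp_zero, one_mul] at this
    exact this
  have hent : ∀ i j, HasDerivAt (fun t : ℝ => NormedSpace.exp (t • H) i j) (H i j) 0 := by
    intro i j
    have := (LinearMap.toContinuousLinearMap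
      (Matrix.entryLinearMap ℝ ℝ i j)).hasFDerivAt.comp_hasDerivAt 0 hd
    exact this
  constructor
  · intro i j hij
    have hdL := hent i j
    refine deriv_nonneg_aux hdL ?_ ?_
    · simp [NormedSpace.exp_zero, Matrix.one_apply, hij]
    · intro t ht
      exact (h t ht.le).1 i j
  · intro j
    have hdL : HasDerivAt (fun t : ℝ => ∑ i, NormedSpace.exp (t • H) i j) (∑ i, H i j) 0 :=
      HasDerivAt.fun_sum fun i _ => hent i j
    refine deriv_zero_aux hdL ?_
    intro t ht
    have h1 := (h t ht.le).2 j
    have h2 := (h 0 le_rfl).2 j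
    show ∑ i, NormedSpace.exp (t • H) i j = ∑ i, NormedSpace.exp ((0:ℝ) • H) i j
    rw [h1]
    rw [h2]
end

section
/- Let n be a nonempty finite type and H : Matrix n n ℝ such that for every real t ≥ 0 the matrix exp(t • H) is stochastic. Suppose f : n → ℝ satisfies f i > 0 for all i, ∑ i, f i = 1, and H.mulVec f = λ • f for some real number λ. Then λ = 0. -/
lemma pow_mulVec_eig {n : Type*} [Fintype n] [DecidableEq n] (H : Matrix n n ℝ)
    (f : n → ℝ) (lam : ℝ) (heig : H.mulVec f = lam • f) (k : ℕ) :
    (H ^ k).mulVec f = (lam ^ k) • f := by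
  induction k with
  | zero => simp [Matrix.mulVec_one, Matrix.one_mulVec]
  | succ k ih =>
      rw [pow_succ, ← Matrix.mulVec_mulVec, heig, Matrix.mulVec_smul, ih, pow_succ, mul_comm, smul_smul]

lemma exp_mulVec_eig {n : Type*} [Fintype n] [DecidableEq n] (H : Matrix n n ℝ)
    (f : n → ℝ) (lam : ℝ) (heig : H.mulVec f = lam • f) :
    (NormedSpace.exp H).mulVec f = Real.exp lam • f := by
  letI : SeminormedRing (Matrix n n ℝ) := Matrix.linftyOpSemiNormedRing
  letI : NormedRing (Matrix n n ℝ) := Matrix.linftyOpNormedRing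
  letI : NormedAlgebra ℝ (Matrix n n ℝ) := Matrix.linftyOpNormedAlgebra
  let L : Matrix n n ℝ →ₗ[ℝ] (n → ℝ) :=
    { toFun := fun M => M.mulVec f
      map_add' := fun M N => Matrix.add_mulVec M N f
      map_smul' := fun c M => by simp [Matrix.smul_mulVec] }
  have hLcont : Continuous L := L.continuous_of_finiteDimensional
  have hsum : Summable fun k : ℕ => (k.factorial : ℝ)⁻¹ • H ^ k :=
    NormedSpace.expSeries_summable' (𝕂 := ℝ) H
  have h1 : (NormedSpace.exp H).mulVec f
      = ∑' k : ℕ, L ((k.factorial : ℝ)⁻¹ • H ^ k) := by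
    rw [NormedSpace.exp_eq_tsum (𝕂 := ℝ)]
    exact (hsum.hasSum.map L hLcont).tsum_eq.symm
  have h2 : ∀ k : ℕ, L ((k.factorial : ℝ)⁻¹ • H ^ k) = ((k.factorial : ℝ)⁻¹ * lam ^ k) • f := by
    intro k
    simp only [map_smul, L, LinearMap.coe_mk, AddHom.coe_mk,
      pow_mulVec_eig H f lam heig k, smul_smul]
  rw [h1]
  simp_rw [h2]
  have hsum2 : Summable fun k : ℕ => (k.factorial : ℝ)⁻¹ * lam ^ k := by
    simpa [smul_eq_mul] using NormedSpace.expSeries_summable' (𝕂 := ℝ) lam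
  rw [Summable.tsum_smul_const hsum2]
  congr 1
  rw [Real.exp_eq_exp_ℝ, NormedSpace.exp_eq_tsum (𝕂 := ℝ)]
  simp [smul_eq_mul]

theorem eigenvalue_zero_of_positive_eigenvector
    {n : Type*} [Fintype n] [DecidableEq n] [Nonempty n] (H : Matrix n n ℝ)
    (h : ∀ t : ℝ, 0 ≤ t → IsStochastic (NormedSpace.exp (t • H)))
    (f : n → ℝ) (hfpos : ∀ i, 0 < f i) (hfsum : ∑ i, f i = 1)
    (lam : ℝ) (heig : H.mulVec f = lam • f) :
    lam = 0 := by
  have h1 := h 1 zero_le_one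
  rw [one_smul] at h1
  have hexp := exp_mulVec_eig H f lam heig
  set A := NormedSpace.exp H with hA
  have hsum1 : ∑ i, A.mulVec f i = 1 := by
    simp only [Matrix.mulVec, dotProduct]
    rw [Finset.sum_comm]
    calc ∑ j, ∑ i, A i j * f j = ∑ j, (∑ i, A i j) * f j := by
          simp [Finset.sum_mul]
      _ = ∑ j, f j := by simp [h1.2]
      _ = 1 := hfsum
  rw [hexp] at hsum1
  simp only [Pi.smul_apply, smul_eq_mul, ← Finset.mul_sum, hfsum, mul_one] at hsum1
  rw [← Real.log_exp lam, hsum1, Real.log_one]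
end

section
/- Let n be a nonempty finite type and H : Matrix n n ℝ such that for every real t ≥ 0 the matrix exp(t • H) is stochastic. Then every complex eigenvalue μ of H (that is, every μ in the spectrum over ℂ of the complexified matrix H.map Complex.ofReal) satisfies either μ = 0 or Re(μ) < 0. -/
open Matrix Filter Set Topology

/-- Entry-wise derivative of `t ↦ exp(t • H)` at `0` is `H`. -/
lemma entry_hasDerivAt_exp {n : Type*} [Fintype n] [DecidableEq n]
    (H : Matrix n n ℝ) (i j : n) :
    HasDerivAt (fun t : ℝ => (NormedSpace.exp (t • H)) i j) (H i j) 0 := by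
  letI : SeminormedRing (Matrix n n ℝ) := Matrix.linftyOpSemiNormedRing
  letI : NormedRing (Matrix n n ℝ) := Matrix.linftyOpNormedRing
  letI : NormedAlgebra ℝ (Matrix n n ℝ) := Matrix.linftyOpNormedAlgebra
  have hD : HasDerivAt (fun t : ℝ => NormedSpace.exp (t • H))
      (NormedSpace.exp ((0:ℝ) • H) * H) 0 := hasDerivAt_exp_smul_const H 0
  have h0 : NormedSpace.exp ((0:ℝ) • H) * H = H := by
    simp [NormedSpace.exp_zero]
  rw [h0] at hD
  have L : Matrix n n ℝ →ₗ[ℝ] ℝ :=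
    (Matrix.entryLinearMap ℝ ℝ i j)
  have hL := (LinearMap.toContinuousLinearMap
      (Matrix.entryLinearMap ℝ ℝ i j)).hasFDerivAt (x := NormedSpace.exp ((0:ℝ) • H))
  have := hL.comp_hasDerivAt 0 hD
  exact this

theorem eigenvalues_zero_or_neg_re_of_exp_stochastic
    {n : Type*} [Fintype n] [DecidableEq n] [Nonempty n] (H : Matrix n n ℝ)
    (h : ∀ t : ℝ, 0 ≤ t → IsStochastic (NormedSpace.exp (t • H))) :
    ∀ μ ∈ spectrum ℂ (H.map Complex.ofReal), μ = 0 ∨ μ.re < 0 := by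
  -- Step 1: H is a Q-matrix.
  have hexp0 : ∀ i j : n, (NormedSpace.exp ((0:ℝ) • H)) i j = if i = j then 1 else 0 := by
    intro i j
    simp [NormedSpace.exp_zero, Matrix.one_apply]
  have hoff : ∀ i j : n, i ≠ j → 0 ≤ H i j := by
    intro i j hij
    have hD := (entry_hasDerivAt_exp H i j)
    rw [hasDerivAt_iff_tendsto_slope] at hD
    have hD' : Tendsto (slope (fun t : ℝ => (NormedSpace.exp (t • H)) i j) 0)
        (𝓝[>] (0:ℝ)) (𝓝 (H i j)) :=
      hD.mono_left (nhdsWithin_mono _ (fun x hx => ne_of_gt hx))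
    refine ge_of_tendsto hD' ?_
    filter_upwards [self_mem_nhdsWithin] with t ht
    have ht' : (0:ℝ) < t := ht
    have h1 := (h t ht'.le).1 i j
    rw [slope_def_field, hexp0 i j, if_neg hij]
    exact div_nonneg (by linarith) (by linarith)
  have hcol : ∀ j : n, ∑ i, H i j = 0 := by
    intro j
    have hD : HasDerivAt (fun t : ℝ => ∑ i, (NormedSpace.exp (t • H)) i j)
        (∑ i, H i j) 0 := HasDerivAt.fun_sum (fun i _ => entry_hasDerivAt_exp H i j)
    rw [hasDerivAt_iff_tendsto_slope] at hD
    have hD' : Tendsto (slope (fun t : ℝ => ∑ i, (NormedSpace.exp (t • H)) i j) 0)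
        (𝓝[>] (0:ℝ)) (𝓝 (∑ i, H i j)) :=
      hD.mono_left (nhdsWithin_mono _ (fun x hx => ne_of_gt hx))
    have hz : Tendsto (slope (fun t : ℝ => ∑ i, (NormedSpace.exp (t • H)) i j) 0)
        (𝓝[>] (0:ℝ)) (𝓝 0) := by
      refine Tendsto.congr' ?_ tendsto_const_nhds
      filter_upwards [self_mem_nhdsWithin] with t ht
      have ht' : (0:ℝ) < t := ht
      have h1 := (h t ht'.le).2 j
      have h0 : ∑ i, (NormedSpace.exp ((0:ℝ) • H)) i j = 1 := (h 0 le_rfl).2 j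
      rw [slope_def_field, h1, h0]
      simp
    exact (tendsto_nhds_unique hz hD').symm
  have hdiag : ∀ j : n, H j j ≤ 0 := by
    intro j
    have := hcol j
    rw [← Finset.add_sum_erase _ _ (Finset.mem_univ j)] at this
    have hs : 0 ≤ ∑ i ∈ Finset.univ.erase j, H i j :=
      Finset.sum_nonneg fun i hi => hoff i j (Finset.ne_of_mem_erase hi)
    linarith
  -- Step 2: Gershgorin.
  intro μ hμ
  set M := H.map (Complex.ofReal)
  have hspecT : μ ∈ spectrum ℂ Mᵀ := by
    rw [spectrum.mem_iff] at hμ ⊢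
    intro hu
    apply hμ
    rw [Matrix.isUnit_iff_isUnit_det] at hu ⊢
    rwa [show algebraMap ℂ (Matrix n n ℂ) μ - Mᵀ = (algebraMap ℂ (Matrix n n ℂ) μ - M)ᵀ by
        rw [Matrix.transpose_sub]
        congr 1
        rw [Matrix.algebraMap_eq_diagonal, Matrix.diagonal_transpose],
      Matrix.det_transpose] at hu
  have heig : Module.End.HasEigenvalue (Matrix.toLin' Mᵀ) μ := by
    rw [Module.End.hasEigenvalue_iff_mem_spectrum]
    rw [show Matrix.toLin' Mᵀ = Matrix.toLinAlgEquiv' Mᵀ from rfl]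
    rwa [AlgEquiv.spectrum_eq Matrix.toLinAlgEquiv' Mᵀ]
  obtain ⟨k, hk⟩ := eigenvalue_mem_ball heig
  rw [Metric.mem_closedBall, dist_eq_norm] at hk
  have hrad : ∑ j ∈ Finset.univ.erase k, ‖Mᵀ k j‖ = -H k k := by
    have : ∀ i ∈ Finset.univ.erase k, ‖Mᵀ k i‖ = H i k := by
      intro i hi
      simp only [Matrix.transpose_apply, M, Matrix.map_apply, Complex.norm_real]
      exact abs_of_nonneg (hoff i k (Finset.ne_of_mem_erase hi))
    rw [Finset.sum_congr rfl this]
    have := hcol k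
    rw [← Finset.add_sum_erase _ _ (Finset.mem_univ k)] at this
    linarith
  rw [hrad] at hk
  have hkk : Mᵀ k k = (H k k : ℂ) := rfl
  rw [hkk] at hk
  by_cases hre : μ.re < 0
  · exact Or.inr hre
  · left
    push_neg at hre
    have hd := hdiag k
    have hk2 : ‖μ - (H k k : ℂ)‖ ^ 2 ≤ (-H k k) ^ 2 := by
      have := norm_nonneg (μ - (H k k : ℂ))
      nlinarith
    rw [← Complex.normSq_eq_norm_sq] at hk2
    have hre2 : (μ - (H k k : ℂ)).re = μ.re - H k k := by simp
    have him2 : (μ - (H k k : ℂ)).im = μ.im := by simp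
    rw [Complex.normSq_apply, hre2, him2] at hk2
    have h1 : μ.re = 0 := by nlinarith
    have h2 : μ.im = 0 := by nlinarith
    exact Complex.ext h1 h2
end

section
/- Let n be a finite type and A : Matrix n n ℂ a complex square matrix all of whose eigenvalues (elements of its spectrum over ℂ) have strictly negative real part. Then exp(t • A) tends to the zero matrix as the real parameter t tends to +∞. -/
open Filter Topology Matrix

private lemma aux_pow_exp (j : ℕ) {c : ℝ} (hc : 0 < c) :
    Tendsto (fun t : ℝ => t ^ j * Real.exp (-(c * t))) atTop (𝓝 0) := by
  have h1 : Tendsto (fun t : ℝ => c * t) atTop atTop :=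
    Tendsto.const_mul_atTop hc tendsto_id
  have h2 := (Real.tendsto_pow_mul_exp_neg_atTop_nhds_zero j).comp h1
  have h3 := h2.const_mul ((c ^ j)⁻¹)
  rw [mul_zero] at h3
  refine h3.congr fun t => ?_
  simp only [Function.comp_apply]
  rw [mul_pow]
  field_simp

theorem exp_smul_tendsto_zero_of_spectrum_re_neg
    {n : Type*} [Fintype n] [DecidableEq n] (A : Matrix n n ℂ)
    (h : ∀ μ ∈ spectrum ℂ A, μ.re < 0) :
    Tendsto (fun t : ℝ => NormedSpace.exp (t • A)) atTop (𝓝 0) := by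
  classical
  set f : Module.End ℂ (n → ℂ) := Matrix.toLinAlgEquiv' A with hf
  have hTop : ∀ v : n → ℂ, Tendsto (fun t : ℝ => NormedSpace.exp (t • A) *ᵥ v) atTop (𝓝 0) := by
    let S : Submodule ℂ (n → ℂ) :=
      { carrier := {v | Tendsto (fun t : ℝ => NormedSpace.exp (t • A) *ᵥ v) atTop (𝓝 0)}
        add_mem' := fun {x y} hx hy => by
          simpa [Matrix.mulVec_add] using hx.add hy
        zero_mem' := by
          simpa [Matrix.mulVec_zero] using
            (tendsto_const_nhds : Tendsto (fun _ : ℝ => (0 : n → ℂ)) atTop _)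
        smul_mem' := fun c v hv => by
          simpa [Matrix.mulVec_smul] using hv.const_smul c }
    have hle : ∀ μ : ℂ, f.maxGenEigenspace μ ≤ S := by
      intro μ v hv
      rcases eq_or_ne v 0 with rfl | hv0
      · exact S.zero_mem
      obtain ⟨k, hk⟩ := (Module.End.mem_maxGenEigenspace f μ v).mp hv
      have hμ : μ ∈ spectrum ℂ A := by
        rw [← AlgEquiv.spectrum_eq (Matrix.toLinAlgEquiv' (R := ℂ) (n := n)) A,
          ← Module.End.hasEigenvalue_iff_mem_spectrum]
        refine Module.End.hasEigenvalue_of_hasGenEigenvalue (k := k) ?_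
        rw [Module.End.hasGenEigenvalue_iff]
        rw [Submodule.ne_bot_iff]
        exact ⟨v, (Module.End.mem_genEigenspace_nat).mpr hk, hv0⟩
      have hre : μ.re < 0 := h μ hμ
      set N : Matrix n n ℂ := A - μ • (1 : Matrix n n ℂ) with hN
      have hmap : ∀ j : ℕ, N ^ j *ᵥ v = ((f - μ • 1) ^ j) v := by
        intro j
        have h1 : Matrix.toLinAlgEquiv' (N ^ j) = (f - μ • 1) ^ j := by
          rw [map_pow, map_sub, _root_.map_smul, _root_.map_one, hf]
        rw [← h1, Matrix.toLinAlgEquiv'_apply]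
      have hNv : ∀ j : ℕ, k ≤ j → N ^ j *ᵥ v = 0 := by
        intro j hj
        obtain ⟨l, rfl⟩ := Nat.exists_eq_add_of_le hj
        rw [hmap, add_comm, pow_add, Module.End.mul_apply, hk, map_zero]
      have hsplit : ∀ t : ℝ,
          NormedSpace.exp (t • A)
            = Complex.exp ((t : ℂ) * μ) • NormedSpace.exp ((t : ℂ) • N) := by
        intro t
        letI : SeminormedRing (Matrix n n ℂ) := Matrix.linftyOpSemiNormedRing
        letI : NormedRing (Matrix n n ℂ) := Matrix.linftyOpNormedRing
        letI : NormedAlgebra ℂ (Matrix n n ℂ) := Matrix.linftyOpNormedAlgebra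
        have h1 : t • A = (t : ℂ) • A := (algebraMap_smul ℂ t A).symm
        have h2 : (t : ℂ) • A = (t : ℂ) • N + ((t : ℂ) * μ) • (1 : Matrix n n ℂ) := by
          rw [hN, smul_sub, smul_smul, sub_add_cancel]
        have hcomm : Commute ((t : ℂ) • N) (((t : ℂ) * μ) • (1 : Matrix n n ℂ)) :=
          ((Commute.one_right N).smul_left _).smul_right _
        rw [h1, h2, Matrix.exp_add_of_commute _ _ hcomm]
        have h3 : ((t : ℂ) * μ) • (1 : Matrix n n ℂ) = algebraMap ℂ _ ((t : ℂ) * μ) :=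
          (Algebra.algebraMap_eq_smul_one _).symm
        rw [h3]
        erw [← NormedSpace.algebraMap_exp_comm]
        rw [Algebra.algebraMap_eq_smul_one,
          ← Complex.exp_eq_exp_ℂ, mul_smul_comm, mul_one]
      have hexpN : ∀ t : ℝ,
          NormedSpace.exp ((t : ℂ) • N) *ᵥ v
            = ∑ j ∈ Finset.range k,
                ((j.factorial : ℂ)⁻¹ * (t : ℂ) ^ j) • (N ^ j *ᵥ v) := by
        intro t
        letI : SeminormedRing (Matrix n n ℂ) := Matrix.linftyOpSemiNormedRing
        letI : NormedRing (Matrix n n ℂ) := Matrix.linftyOpNormedRing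
        letI : NormedAlgebra ℂ (Matrix n n ℂ) := Matrix.linftyOpNormedAlgebra
        let g : Matrix n n ℂ →ₗ[ℂ] (n → ℂ) :=
          { toFun := fun M => M *ᵥ v
            map_add' := fun M₁ M₂ => Matrix.add_mulVec M₁ M₂ v
            map_smul' := fun c M => Matrix.smul_mulVec c M v }
        have hg : Continuous g := g.continuous_of_finiteDimensional
        have hsum := NormedSpace.expSeries_summable' (𝕂 := ℂ) ((t : ℂ) • N)
        have hmapsum := (hsum.hasSum.map g hg).tsum_eq
        have hterm : ∀ j : ℕ,
            g (((j.factorial : ℂ))⁻¹ • ((t : ℂ) • N) ^ j)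
              = ((j.factorial : ℂ)⁻¹ * (t : ℂ) ^ j) • (N ^ j *ᵥ v) := by
          intro j
          show ((((j.factorial : ℂ))⁻¹ • ((t : ℂ) • N) ^ j)) *ᵥ v = _
          rw [smul_pow, smul_smul, Matrix.smul_mulVec]
        calc NormedSpace.exp ((t : ℂ) • N) *ᵥ v
            = g (∑' j : ℕ, ((j.factorial : ℂ))⁻¹ • ((t : ℂ) • N) ^ j) := by
              rw [NormedSpace.exp_eq_tsum (𝕂 := ℂ)]; rfl
          _ = ∑' j : ℕ, g (((j.factorial : ℂ))⁻¹ • ((t : ℂ) • N) ^ j) := hmapsum.symm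
          _ = ∑ j ∈ Finset.range k,
                ((j.factorial : ℂ)⁻¹ * (t : ℂ) ^ j) • (N ^ j *ᵥ v) := by
              rw [tsum_eq_sum (s := Finset.range k) ?_]
              · exact Finset.sum_congr rfl fun j _ => hterm j
              · intro j hj
                rw [hterm j, hNv j (by simpa using hj), smul_zero]
      have heq : (fun t : ℝ => NormedSpace.exp (t • A) *ᵥ v)
          = fun t : ℝ => ∑ j ∈ Finset.range k,
              (Complex.exp ((t : ℂ) * μ) * ((j.factorial : ℂ)⁻¹ * (t : ℂ) ^ j))
                • (N ^ j *ᵥ v) := by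
        funext t
        rw [hsplit t, Matrix.smul_mulVec, hexpN t, Finset.smul_sum]
        exact Finset.sum_congr rfl fun j _ => by rw [smul_smul]
      show Tendsto _ atTop (𝓝 0)
      rw [heq]
      have h0 : (0 : n → ℂ) = ∑ j ∈ Finset.range k, (0 : n → ℂ) := by simp
      rw [h0]
      refine tendsto_finset_sum _ fun j _ => ?_
      have hscal : Tendsto
          (fun t : ℝ => Complex.exp ((t : ℂ) * μ) * ((j.factorial : ℂ)⁻¹ * (t : ℂ) ^ j))
          atTop (𝓝 0) := by
        have hc : (0 : ℝ) < -μ.re := by linarith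
        have hbound := (aux_pow_exp j hc).const_mul ((j.factorial : ℝ))⁻¹
        rw [mul_zero] at hbound
        refine squeeze_zero_norm' ?_ hbound
        filter_upwards [eventually_ge_atTop (0 : ℝ)] with t ht
        have habs : ‖Complex.exp ((t : ℂ) * μ) * ((j.factorial : ℂ)⁻¹ * (t : ℂ) ^ j)‖
            = Real.exp (t * μ.re) * ((j.factorial : ℝ)⁻¹ * t ^ j) := by
          rw [norm_mul, norm_mul, Complex.norm_exp]
          simp [Complex.norm_natCast, abs_of_nonneg ht, Complex.mul_re]
        rw [habs]
        apply le_of_eq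
        rw [neg_mul, neg_neg]
        ring_nf
      have := hscal.smul_const (N ^ j *ᵥ v)
      simpa using this
    intro v
    have hv : v ∈ ⨆ μ : ℂ, f.maxGenEigenspace μ := by
      rw [Module.End.iSup_maxGenEigenspace_eq_top f]
      exact Submodule.mem_top
    exact iSup_le hle hv
  have hentry : ∀ i j, Tendsto (fun t : ℝ => NormedSpace.exp (t • A) i j) atTop (𝓝 0) := by
    intro i j
    have := tendsto_pi_nhds.mp (hTop (Pi.single j 1)) i
    simpa [Matrix.mulVec_single] using this
  exact tendsto_pi_nhds.mpr fun i => tendsto_pi_nhds.mpr fun j => hentry i j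
end

section
/- Let n be a nonempty finite type and let α : ℝ≥0 → Matrix n n ℝ be a Markov semigroup: α is continuous, α 0 = 1, α (s + t) = α s * α t for all s, t, and α t is stochastic for every t. Then there exists a matrix P : Matrix n n ℝ such that α t tends to P as t → ∞ (Tendsto α atTop (𝓝 P)), and moreover P * P = P. -/
open Filter Topology
open scoped NNReal

open Finset

/-- Central binomial squared bound: `C(2m,m)^2 * (2m+1) ≤ 16^m`. -/
lemma central_sq_bound : ∀ m : ℕ, (Nat.choose (2*m) m)^2 * (2*m+1) ≤ 16^m := by
  intro m
  induction m with
  | zero => simp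
  | succ m ih =>
    -- key identities
    have h1 : (2*m+2) * Nat.choose (2*m+1) m = Nat.choose (2*m+2) (m+1) * (m+1) := by
      have := Nat.add_one_mul_choose_eq (2*m+1) m
      simpa [Nat.succ_eq_add_one, mul_comm, mul_left_comm, mul_assoc] using this
    have h2 : (2*m+1) * Nat.choose (2*m) m = Nat.choose (2*m+1) (m+1) * (m+1) := by
      have := Nat.add_one_mul_choose_eq (2*m) m
      simpa [Nat.succ_eq_add_one] using this
    have hsymm : Nat.choose (2*m+1) (m+1) = Nat.choose (2*m+1) m := by
      have h : m + 1 ≤ 2*m+1 := by omega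
      have := Nat.choose_symm h
      simpa [show 2*m+1 - (m+1) = m by omega] using this.symm
    -- combine: C(2m+2, m+1) * (m+1)^2 = (2m+2)(2m+1) C(2m,m)
    have h3 : Nat.choose (2*m+2) (m+1) * (m+1)^2 = (2*m+2) * ((2*m+1) * Nat.choose (2*m) m) := by
      calc Nat.choose (2*m+2) (m+1) * (m+1)^2
          = (Nat.choose (2*m+2) (m+1) * (m+1)) * (m+1) := by ring
        _ = ((2*m+2) * Nat.choose (2*m+1) m) * (m+1) := by rw [h1]
        _ = (2*m+2) * (Nat.choose (2*m+1) m * (m+1)) := by ring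
        _ = (2*m+2) * ((2*m+1) * Nat.choose (2*m) m) := by
            rw [← hsymm, ← h2]
    -- now square and bound
    have key : (Nat.choose (2*(m+1)) (m+1))^2 * (2*(m+1)+1) * (m+1)^4 ≤ 16^(m+1) * (m+1)^4 := by
      have e1 : (Nat.choose (2*(m+1)) (m+1))^2 * (2*(m+1)+1) * (m+1)^4
          = ((2*m+2) * ((2*m+1) * Nat.choose (2*m) m))^2 * (2*m+3) := by
        have : 2*(m+1) = 2*m+2 := by ring
        rw [this]
        calc (Nat.choose (2*m+2) (m+1))^2 * (2*(m+1)+1) * (m+1)^4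
            = (Nat.choose (2*m+2) (m+1) * (m+1)^2)^2 * (2*m+3) := by ring
          _ = ((2*m+2) * ((2*m+1) * Nat.choose (2*m) m))^2 * (2*m+3) := by rw [h3]
      rw [e1]
      have e2 : ((2*m+2) * ((2*m+1) * Nat.choose (2*m) m))^2 * (2*m+3)
          = (2*m+2)^2 * ((2*m+1)*(2*m+3)) * ((Nat.choose (2*m) m)^2 * (2*m+1)) := by ring
      rw [e2]
      have hb : (2*m+1)*(2*m+3) ≤ (2*m+2)^2 := by nlinarith
      calc (2*m+2)^2 * ((2*m+1)*(2*m+3)) * ((Nat.choose (2*m) m)^2 * (2*m+1))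
          ≤ (2*m+2)^2 * (2*m+2)^2 * (16^m) := by
            exact Nat.mul_le_mul (Nat.mul_le_mul_left _ hb) ih
        _ = 16 * (m+1)^4 * 16^m := by ring
        _ = 16^(m+1) * (m+1)^4 := by ring
    exact Nat.le_of_mul_le_mul_right key (by positivity)

/-- `C(k, k/2)^2 * (k+1) ≤ 4^(k+1)` for all `k`. -/
lemma choose_half_sq (k : ℕ) : (Nat.choose k (k/2))^2 * (k+1) ≤ 4^(k+1) := by
  rcases Nat.even_or_odd k with ⟨m, hm⟩ | ⟨m, hm⟩
  · subst hm
    have h := central_sq_bound m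
    have : Nat.choose (m+m) ((m+m)/2) = Nat.choose (2*m) m := by
      congr 1 <;> omega
    rw [this]
    calc (Nat.choose (2*m) m)^2 * (m+m+1) = (Nat.choose (2*m) m)^2 * (2*m+1) := by ring_nf
      _ ≤ 16^m := h
      _ ≤ 4^(m+m+1) := by
          have : (16:ℕ)^m = 4^(2*m) := by rw [pow_mul]; norm_num
          rw [this]; exact Nat.pow_le_pow_right (by norm_num) (by omega)
  · subst hm
    have hh : (2*m+1)/2 = m := by omega
    rw [hh]
    have hle : Nat.choose (2*m+1) m ≤ 2 * Nat.choose (2*m) m := by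
      rcases m with _ | m'
      · simp
      · have hp : Nat.choose (2*(m'+1)+1) (m'+1) = Nat.choose (2*(m'+1)) m' + Nat.choose (2*(m'+1)) (m'+1) :=
          Nat.choose_succ_succ (2*(m'+1)) m'
        have b1 : Nat.choose (2*(m'+1)) m' ≤ Nat.choose (2*(m'+1)) (m'+1) := by
          have := Nat.choose_le_middle m' (2*(m'+1))
          simpa [show (2*(m'+1))/2 = m'+1 by omega] using this
        omega
    calc (Nat.choose (2*m+1) m)^2 * (2*m+1+1)
        ≤ (2 * Nat.choose (2*m) m)^2 * (2*m+2) := by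
          apply Nat.mul_le_mul_right
          exact Nat.pow_le_pow_left hle 2
      _ = 4 * ((Nat.choose (2*m) m)^2 * (2*m+1)) + 4*(Nat.choose (2*m) m)^2 := by ring
      _ ≤ 4 * 16^m + 4*(Nat.choose (2*m) m)^2 := by
          have := central_sq_bound m; omega
      _ ≤ 4 * 16^m + 4 * ((Nat.choose (2*m) m)^2 * (2*m+1)) := by
          nlinarith [Nat.zero_le (m * (Nat.choose (2*m) m)^2)]
      _ ≤ 4 * 16^m + 4 * 16^m := by have := central_sq_bound m; omega
      _ ≤ 16 * 16^m := by omega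
      _ = 4^(2*m+1+1) := by rw [show 2*m+1+1 = 2*(m+1) by ring, pow_mul]; ring_nf

lemma choose_mono_up {k m : ℕ} (h : m < (k+1)/2) : Nat.choose k m ≤ Nat.choose k (m+1) := by
  by_cases hm : m < k/2
  · exact Nat.choose_le_succ_of_lt_half_left hm
  · have hk : k = 2*m+1 := by omega
    subst hk
    have hs := Nat.choose_symm (show m+1 ≤ 2*m+1 by omega)
    rw [show 2*m+1 - (m+1) = m by omega] at hs
    rw [hs]

lemma choose_mono_down {k m : ℕ} (h : (k+1)/2 ≤ m) : Nat.choose k (m+1) ≤ Nat.choose k m := by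
  by_cases hm : k ≤ m
  · rw [Nat.choose_eq_zero_of_lt (by omega)]
    exact Nat.zero_le _
  · have h1 : Nat.choose k (m+1) = Nat.choose k (k-(m+1)) := (Nat.choose_symm (by omega)).symm
    have h2 : Nat.choose k m = Nat.choose k (k-m) := (Nat.choose_symm (by omega)).symm
    rw [h1, h2]
    have e : k - m = (k - (m+1)) + 1 := by omega
    rw [e]
    exact choose_mono_up (by omega)

lemma choose_mid_eq (k : ℕ) : Nat.choose k ((k+1)/2) = Nat.choose k (k/2) := by
  rcases Nat.even_or_odd k with ⟨m, hm⟩ | ⟨m, hm⟩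
  · subst hm; congr 1; omega
  · subst hm
    rw [show (2*m+1+1)/2 = m+1 by omega, show (2*m+1)/2 = m by omega]
    have hs := Nat.choose_symm (show m+1 ≤ 2*m+1 by omega)
    rw [show 2*m+1 - (m+1) = m by omega] at hs
    exact hs.symm

lemma tv_bound (k : ℕ) :
    ∑ m ∈ range (k+2), |((k.choose m : ℝ)) - (if m = 0 then 0 else (k.choose (m-1) : ℝ))|
      ≤ 2 * (k.choose (k/2) : ℝ) := by
  set c : ℕ → ℝ := fun m => (k.choose m : ℝ) with hc
  have hsplit := Finset.sum_range_succ'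
    (fun m => |c m - (if m = 0 then 0 else c (m-1))|) (k+1)
  rw [hsplit]
  simp only [if_pos rfl, Nat.add_sub_cancel, if_neg (Nat.succ_ne_zero _)]
  have hterm : ∀ m, |c (m+1) - c m| = (if m < (k+1)/2 then c (m+1) - c m else c m - c (m+1)) := by
    intro m
    split_ifs with h
    · rw [abs_of_nonneg]
      have := choose_mono_up (k := k) h
      simp only [hc, sub_nonneg, Nat.cast_le]
      exact this
    · rw [abs_of_nonpos, neg_sub]
      have := choose_mono_down (k := k) (m := m) (le_of_not_gt h)
      simp only [hc, sub_nonpos, Nat.cast_le]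
      exact this
  have hmid : (k+1)/2 ≤ k+1 := by omega
  have hsum : ∑ m ∈ range (k+1), |c (m+1) - c m|
      = ∑ m ∈ range ((k+1)/2), (c (m+1) - c m)
        + ∑ m ∈ Ico ((k+1)/2) (k+1), (c m - c (m+1)) := by
    rw [range_eq_Ico, ← Finset.sum_Ico_consecutive _ (Nat.zero_le ((k+1)/2)) hmid,
        ← range_eq_Ico]
    congr 1
    · exact Finset.sum_congr rfl (fun m hm => by
        rw [hterm m, if_pos (Finset.mem_range.mp hm)])
    · exact Finset.sum_congr rfl (fun m hm => by
        rw [hterm m, if_neg (by simpa using not_lt.mpr (Finset.mem_Ico.mp hm).1)])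
  rw [hsum]
  rw [Finset.sum_range_sub c ((k+1)/2)]
  rw [Finset.sum_Ico_eq_sum_range]
  rw [show (∑ i ∈ range (k+1 - (k+1)/2), (c ((k+1)/2 + i) - c ((k+1)/2 + i + 1)))
      = ∑ i ∈ range (k+1 - (k+1)/2), ((fun i => c ((k+1)/2 + i)) i - (fun i => c ((k+1)/2 + i)) (i+1)) from
    Finset.sum_congr rfl (fun i _ => by simp [add_assoc])]
  rw [Finset.sum_range_sub' (fun i => c ((k+1)/2 + i))]
  have hck1 : c (k+1) = 0 := by
    simp [hc, Nat.choose_eq_zero_of_lt (Nat.lt_succ_self k)]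
  have hend : (k+1)/2 + (k+1 - (k+1)/2) = k+1 := by omega
  have hc0 : c 0 = 1 := by simp [hc]
  have hmide : c ((k+1)/2) = (k.choose (k/2) : ℝ) := by
    simp only [hc]; exact_mod_cast congrArg (Nat.cast (R := ℝ)) (choose_mid_eq k)
  simp only [add_zero, hend, hck1, hc0, hmide]
  norm_num
  linarith

set_option linter.unusedSectionVars false

section MatN
variable {n : Type*} [Fintype n] [DecidableEq n]

/-- entrywise ℓ¹ norm -/
noncomputable def matN (M : Matrix n n ℝ) : ℝ := ∑ i, ∑ j, |M i j|

lemma matN_nonneg (M : Matrix n n ℝ) : 0 ≤ matN M := by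
  apply Finset.sum_nonneg; intro i _; apply Finset.sum_nonneg; intro j _; positivity

lemma entry_le_matN (M : Matrix n n ℝ) (i j : n) : |M i j| ≤ matN M := by
  have h1 : |M i j| ≤ ∑ j', |M i j'| :=
    Finset.single_le_sum (f := fun j' => |M i j'|) (fun j' _ => abs_nonneg _) (Finset.mem_univ j)
  refine h1.trans ?_
  exact Finset.single_le_sum (f := fun i' => ∑ j', |M i' j'|)
    (fun i' _ => Finset.sum_nonneg fun j' _ => abs_nonneg _) (Finset.mem_univ i)

lemma matN_eq_zero {M : Matrix n n ℝ} (h : matN M = 0) : M = 0 := by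
  ext i j
  have := entry_le_matN M i j
  rw [h] at this
  have := abs_nonneg (M i j)
  simp only [Matrix.zero_apply]
  have : |M i j| = 0 := le_antisymm (by linarith) (abs_nonneg _)
  exact abs_eq_zero.mp this

lemma matN_mul_le (A B : Matrix n n ℝ) : matN (A * B) ≤ matN A * matN B := by
  have h1 : matN (A * B) ≤ ∑ i, ∑ j, ∑ k, |A i k| * |B k j| := by
    apply Finset.sum_le_sum; intro i _; apply Finset.sum_le_sum; intro j _
    rw [Matrix.mul_apply]
    refine (Finset.abs_sum_le_sum_abs _ _).trans ?_
    apply Finset.sum_le_sum; intro k _; rw [abs_mul]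
  refine h1.trans ?_
  have h2 : ∀ i, ∑ j, ∑ k, |A i k| * |B k j| = ∑ k, |A i k| * ∑ j, |B k j| := by
    intro i; rw [Finset.sum_comm]
    exact Finset.sum_congr rfl fun k _ => by rw [← Finset.mul_sum]
  calc ∑ i, ∑ j, ∑ k, |A i k| * |B k j| = ∑ i, ∑ k, |A i k| * ∑ j, |B k j| := by
        exact Finset.sum_congr rfl fun i _ => h2 i
    _ ≤ ∑ i, ∑ k, |A i k| * matN B := by
        apply Finset.sum_le_sum; intro i _; apply Finset.sum_le_sum; intro k _
        apply mul_le_mul_of_nonneg_left _ (abs_nonneg _)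
        exact Finset.single_le_sum (f := fun k' => ∑ j, |B k' j|)
          (fun k' _ => Finset.sum_nonneg fun j _ => abs_nonneg _) (Finset.mem_univ k)
    _ = matN A * matN B := by
        simp only [← Finset.sum_mul]; rfl

end MatN

section MatN2
variable {n : Type*} [Fintype n] [DecidableEq n]

lemma matN_smul (a : ℝ) (M : Matrix n n ℝ) : matN (a • M) = |a| * matN M := by
  simp only [matN, Matrix.smul_apply, smul_eq_mul, abs_mul, ← Finset.mul_sum]

lemma matN_sum_le {β : Type*} (s : Finset β) (f : β → Matrix n n ℝ) :
    matN (∑ b ∈ s, f b) ≤ ∑ b ∈ s, matN (f b) := by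
  classical
  induction s using Finset.induction_on with
  | empty => simp [matN]
  | insert a s' hb ih =>
    rw [Finset.sum_insert hb, Finset.sum_insert hb]
    refine le_trans ?_ (add_le_add le_rfl ih)
    -- triangle: matN (X + Y) ≤ matN X + matN Y
    unfold matN
    rw [← Finset.sum_add_distrib]
    apply Finset.sum_le_sum; intro i _
    rw [← Finset.sum_add_distrib]
    apply Finset.sum_le_sum; intro j _
    simpa [Matrix.add_apply] using abs_add_le (f a i j) ((∑ b ∈ s', f b) i j)

lemma matN_stoch {A : Matrix n n ℝ} (hA : IsStochastic A) : matN A = Fintype.card n := by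
  unfold matN
  rw [Finset.sum_comm]
  have : ∀ j, ∑ i, |A i j| = 1 := by
    intro j
    rw [← hA.2 j]
    exact Finset.sum_congr rfl fun i _ => abs_of_nonneg (hA.1 i j)
  simp [this]

lemma stoch_one : IsStochastic (1 : Matrix n n ℝ) := by
  constructor
  · intro i j; by_cases h : i = j <;> simp [Matrix.one_apply, h]
  · intro j; simp [Matrix.one_apply]

lemma stoch_mul {A B : Matrix n n ℝ} (hA : IsStochastic A) (hB : IsStochastic B) :
    IsStochastic (A * B) := by
  constructor
  · intro i j
    rw [Matrix.mul_apply]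
    exact Finset.sum_nonneg fun k _ => mul_nonneg (hA.1 i k) (hB.1 k j)
  · intro j
    simp only [Matrix.mul_apply]
    rw [Finset.sum_comm]
    have : ∀ k, ∑ i, A i k * B k j = B k j := by
      intro k; rw [← Finset.sum_mul, hA.2 k, one_mul]
    simp [this, hB.2 j]

lemma stoch_pow {A : Matrix n n ℝ} (hA : IsStochastic A) (k : ℕ) : IsStochastic (A ^ k) := by
  induction k with
  | zero => simpa using stoch_one
  | succ k ih => rw [pow_succ]; exact stoch_mul ih hA

lemma stoch_entry_le_one {A : Matrix n n ℝ} (hA : IsStochastic A) (i j : n) : A i j ≤ 1 := by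
  rw [← hA.2 j]
  exact Finset.single_le_sum (f := fun i' => A i' j) (fun i' _ => hA.1 i' j) (Finset.mem_univ i)

lemma tendsto_of_matN {β : Type*} {l : Filter β} {g : β → Matrix n n ℝ} {P : Matrix n n ℝ}
    (h : Tendsto (fun b => matN (g b - P)) l (𝓝 0)) : Tendsto g l (𝓝 P) := by
  refine tendsto_pi_nhds.mpr fun i => ?_
  rw [tendsto_pi_nhds]; intro j
  rw [← tendsto_sub_nhds_zero_iff]
  refine squeeze_zero_norm (fun b => ?_) h
  simpa [Matrix.sub_apply] using entry_le_matN (g b - P) i j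

lemma continuous_matN {β : Type*} [TopologicalSpace β] {f : β → Matrix n n ℝ}
    (hf : Continuous f) : Continuous fun b => matN (f b) := by
  unfold matN
  apply continuous_finset_sum; intro i _
  apply continuous_finset_sum; intro j _
  exact (hf.matrix_elem i j).abs

end MatN2

section Est
variable {n : Type*} [Fintype n] [DecidableEq n]

lemma add_one_pow_mat (M : Matrix n n ℝ) (k : ℕ) :
    (M + 1)^k = ∑ m ∈ Finset.range (k+1), (k.choose m : ℝ) • M^m := by
  rw [Commute.add_pow (Commute.one_right M) k]
  refine Finset.sum_congr rfl fun m _ => ?_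
  rw [one_pow, mul_one, ← (Nat.cast_commute (k.choose m) (M^m)).eq, ← nsmul_eq_mul,
    ← Nat.cast_smul_eq_nsmul ℝ]

lemma est {B : Matrix n n ℝ} (hB : IsStochastic B) (k : ℕ) :
    matN (((2:ℝ)⁻¹ • (B + 1))^k - ((2:ℝ)⁻¹ • (B + 1))^(k+1))
      ≤ (Fintype.card n) * (k.choose (k/2) : ℝ) / 2^k := by
  set A : Matrix n n ℝ := (2:ℝ)⁻¹ • (B + 1) with hA
  set D : ℕ → ℝ := fun m => (k.choose m : ℝ) - (if m = 0 then 0 else (k.choose (m-1) : ℝ)) with hD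
  have key : A^k - A^(k+1) = ((2:ℝ)⁻¹ * ((2:ℝ)⁻¹)^k) • ∑ m ∈ range (k+2), D m • B^m := by
    have h3 : (1:Matrix n n ℝ) - A = (2:ℝ)⁻¹ • (1 - B) := by rw [hA]; module
    have step1 : A^k - A^(k+1) = A^k * ((2:ℝ)⁻¹ • (1 - B)) := by
      rw [pow_succ, ← h3, mul_sub, mul_one]
    have step2 : A^k * ((2:ℝ)⁻¹ • (1 - B))
        = ((2:ℝ)⁻¹ * ((2:ℝ)⁻¹)^k) • ((B+1)^k * (1 - B)) := by
      rw [hA, smul_pow, smul_mul_assoc, mul_smul_comm, smul_smul, mul_comm]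
    have step3 : (B+1)^k * (1 - B) = ∑ m ∈ range (k+2), D m • B^m := by
      rw [add_one_pow_mat, Finset.sum_mul]
      have e1 : ∀ m, ((k.choose m : ℝ) • B^m) * (1 - B)
          = (k.choose m : ℝ) • B^m - (k.choose m : ℝ) • B^(m+1) := by
        intro m
        rw [smul_mul_assoc, mul_sub, mul_one, smul_sub, ← pow_succ]
      simp only [e1]
      rw [Finset.sum_sub_distrib]
      have eD : ∀ m, D m • B^m = (k.choose m : ℝ) • B^m
          - (if m = 0 then (0:ℝ) else (k.choose (m-1) : ℝ)) • B^m := by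
        intro m; rw [hD]; rw [sub_smul]
      simp only [eD]
      rw [Finset.sum_sub_distrib]
      congr 1
      · -- extend range by one zero term
        rw [Finset.sum_range_succ (fun m => (k.choose m : ℝ) • B^m) (k+1)]
        rw [Nat.choose_eq_zero_of_lt (Nat.lt_succ_self k)]
        simp
      · -- shift index
        rw [Finset.sum_range_succ' (fun m => (if m = 0 then (0:ℝ) else (k.choose (m-1) : ℝ)) • B^m) (k+1)]
        simp
    rw [step1, step2, step3]
  rw [key, matN_smul, abs_of_nonneg (by positivity : (0:ℝ) ≤ (2:ℝ)⁻¹ * ((2:ℝ)⁻¹)^k)]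
  have hb : matN (∑ m ∈ range (k+2), D m • B^m) ≤ (2 * (k.choose (k/2) : ℝ)) * Fintype.card n := by
    refine (matN_sum_le _ _).trans ?_
    have : ∀ m, matN (D m • B^m) = |D m| * (Fintype.card n : ℝ) := by
      intro m; rw [matN_smul, matN_stoch (stoch_pow hB m)]
    simp only [this]
    rw [← Finset.sum_mul]
    apply mul_le_mul_of_nonneg_right (tv_bound k) (Nat.cast_nonneg _)
  calc (2:ℝ)⁻¹ * ((2:ℝ)⁻¹)^k * matN (∑ m ∈ range (k+2), D m • B^m)
      ≤ (2:ℝ)⁻¹ * ((2:ℝ)⁻¹)^k * ((2 * (k.choose (k/2) : ℝ)) * Fintype.card n) := by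
        apply mul_le_mul_of_nonneg_left hb (by positivity)
    _ = (Fintype.card n) * (k.choose (k/2) : ℝ) / 2^k := by
        field_simp
        have h12 : (1/2:ℝ)^k * 2^k = 1 := by rw [← mul_pow]; norm_num
        linear_combination ((k.choose (k/2) : ℝ) * (Fintype.card n : ℝ)) * h12
end Est

lemma matN_zero {n : Type*} [Fintype n] [DecidableEq n] : matN (0 : Matrix n n ℝ) = 0 := by
  have := matN_smul (n := n) 0 0
  simpa using this

lemma matN_tendsto {n : Type*} [Fintype n] [DecidableEq n] {β : Type*} [Nonempty β]
    [SemilatticeSup β] {g : β → Matrix n n ℝ} {P : Matrix n n ℝ}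
    (h : Tendsto g atTop (𝓝 P)) : Tendsto (fun k => matN (g k - P)) atTop (𝓝 0) := by
  have hc : Continuous fun M : Matrix n n ℝ => matN (M - P) :=
    continuous_matN (continuous_id.sub continuous_const)
  have := (hc.tendsto P).comp h
  simpa [sub_self, matN_zero, Function.comp_def] using this

lemma sqrt_tendsto_atTop : Tendsto Real.sqrt atTop atTop := by
  refine Tendsto.congr' ?_ (tendsto_rpow_atTop (by norm_num : (0:ℝ) < 1/2))
  filter_upwards [eventually_ge_atTop (0:ℝ)] with x hx
  exact (Real.sqrt_eq_rpow x).symm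

lemma rhs_tendsto {n : Type*} [Fintype n] [DecidableEq n] :
    Tendsto (fun k : ℕ => (Fintype.card n : ℝ) * (k.choose (k/2) : ℝ) / 2^k) atTop (𝓝 0) := by
  have hsq : ∀ k : ℕ, ((k.choose (k/2) : ℝ))^2 * (k+1) ≤ 4^(k+1) := by
    intro k
    exact_mod_cast choose_half_sq k
  apply squeeze_zero (g := fun k : ℕ => (Fintype.card n : ℝ) * (2 / Real.sqrt ((k:ℝ)+1)))
  · intro k; positivity
  · intro k
    rw [mul_div_assoc]
    apply mul_le_mul_of_nonneg_left _ (Nat.cast_nonneg _)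
    have hkpos : (0:ℝ) < (k:ℝ) + 1 := by positivity
    have h2k : (0:ℝ) < 2^k := by positivity
    have key : ((k.choose (k/2) : ℝ) / 2^k)^2 ≤ (2 / Real.sqrt ((k:ℝ)+1))^2 := by
      rw [div_pow, div_pow]
      have e1 : ((2:ℝ)^k)^2 = 4^k := by
        rw [← pow_mul, mul_comm, pow_mul]; norm_num
      have e2 : (Real.sqrt ((k:ℝ)+1))^2 = (k:ℝ)+1 := Real.sq_sqrt (le_of_lt hkpos)
      rw [e1, e2]
      rw [div_le_div_iff₀ (by positivity) hkpos]
      have h4 : (4:ℝ)^(k+1) = 4 * 4^k := by rw [pow_succ]; ring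
      nlinarith [hsq k]
    have h1 : (0:ℝ) ≤ (k.choose (k/2) : ℝ) / 2^k := by positivity
    have h2 : (0:ℝ) ≤ 2 / Real.sqrt ((k:ℝ)+1) := by positivity
    nlinarith [key, h1, h2]
  · rw [show (0:ℝ) = (Fintype.card n : ℝ) * 0 by ring]
    apply Tendsto.const_mul
    apply Tendsto.div_atTop tendsto_const_nhds
    apply sqrt_tendsto_atTop.comp
    apply tendsto_atTop_add_const_right
    exact tendsto_natCast_atTop_atTop

theorem key_conv {n : Type*} [Fintype n] [DecidableEq n]
    {A : Matrix n n ℝ} (hA : IsStochastic A) (hdiag : ∀ i, (2:ℝ)⁻¹ ≤ A i i) :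
    ∃ P : Matrix n n ℝ, Tendsto (fun k => A^k) atTop (𝓝 P) ∧ A * P = P ∧ P * A = P := by
  classical
  set B : Matrix n n ℝ := (2:ℝ) • A - 1 with hBdef
  have hBs : IsStochastic B := by
    constructor
    · intro i j
      by_cases h : i = j
      · subst h
        have := hdiag i
        simp only [hBdef, Matrix.sub_apply, Matrix.smul_apply, Matrix.one_apply_eq, smul_eq_mul]
        linarith
      · have := hA.1 i j
        simp only [hBdef, Matrix.sub_apply, Matrix.smul_apply, Matrix.one_apply_ne h, smul_eq_mul]
        linarith
    · intro j
      simp only [hBdef, Matrix.sub_apply, Matrix.smul_apply, smul_eq_mul]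
      rw [Finset.sum_sub_distrib, ← Finset.mul_sum, hA.2 j, stoch_one.2 j]
      norm_num
  have hAB : A = (2:ℝ)⁻¹ • (B + 1) := by rw [hBdef]; module
  have hest : ∀ k, matN (A^k - A^(k+1)) ≤ (Fintype.card n) * (k.choose (k/2) : ℝ) / 2^k := by
    intro k
    rw [hAB]
    exact est hBs k
  have hdiff : Tendsto (fun k => matN (A^k - A^(k+1))) atTop (𝓝 0) :=
    squeeze_zero (fun k => matN_nonneg _) hest rhs_tendsto
  -- compactness
  have hcomp : IsCompact {M : Matrix n n ℝ | ∀ i j, M i j ∈ Set.Icc (0:ℝ) 1} := by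
    have h : IsCompact ((Set.univ.pi fun _ : n => Set.univ.pi fun _ : n => Set.Icc (0:ℝ) 1) :
        Set (Matrix n n ℝ)) :=
      isCompact_univ_pi fun _ => isCompact_univ_pi fun _ => isCompact_Icc
    have hs : {M : Matrix n n ℝ | ∀ i j, M i j ∈ Set.Icc (0:ℝ) 1}
        = ((Set.univ.pi fun _ : n => Set.univ.pi fun _ : n => Set.Icc (0:ℝ) 1) :
        Set (Matrix n n ℝ)) := by
      ext M
      constructor
      · intro hM
        exact fun i _ => fun j _ => hM i j
      · intro hM i j
        exact hM i (Set.mem_univ i) j (Set.mem_univ j)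
    rw [hs]
    exact h
  have hmem : ∀ k : ℕ, A^k ∈ {M : Matrix n n ℝ | ∀ i j, M i j ∈ Set.Icc (0:ℝ) 1} := by
    intro k i j
    exact ⟨(stoch_pow hA k).1 i j, stoch_entry_le_one (stoch_pow hA k) i j⟩
  haveI : FirstCountableTopology (Matrix n n ℝ) :=
    inferInstanceAs (FirstCountableTopology (n → n → ℝ))
  obtain ⟨L, _, φ, hφ, hconv⟩ := hcomp.tendsto_subseq hmem
  have hd0 : Tendsto (fun m => A^(φ m) - A^(φ m + 1)) atTop (𝓝 0) := by
    apply tendsto_of_matN (P := 0)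
    simp only [sub_zero]
    exact hdiff.comp hφ.tendsto_atTop
  have hsucc : Tendsto (fun m => A^(φ m + 1)) atTop (𝓝 L) := by
    have : (fun m => A^(φ m + 1)) = fun m => A^(φ m) - (A^(φ m) - A^(φ m + 1)) := by
      funext m; rw [sub_sub_cancel]
    rw [this]
    simpa using hconv.sub hd0
  have hAL : A * L = L := by
    have h1 : Tendsto (fun m => A^(φ m + 1)) atTop (𝓝 (A * L)) := by
      have hc : Continuous fun M : Matrix n n ℝ => A * M :=
        Continuous.matrix_mul continuous_const continuous_id
      have := (hc.tendsto L).comp hconv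
      simpa [Function.comp_def, pow_succ'] using this
    exact tendsto_nhds_unique h1 hsucc
  have hLA : L * A = L := by
    have h1 : Tendsto (fun m => A^(φ m + 1)) atTop (𝓝 (L * A)) := by
      have hc : Continuous fun M : Matrix n n ℝ => M * A :=
        Continuous.matrix_mul continuous_id continuous_const
      have := (hc.tendsto L).comp hconv
      simpa [Function.comp_def, pow_succ] using this
    exact tendsto_nhds_unique h1 hsucc
  have hpowL : ∀ j : ℕ, A^j * L = L := by
    intro j
    induction j with
    | zero => simp
    | succ j ih => rw [pow_succ, mul_assoc, hAL, ih]
  refine ⟨L, ?_, hAL, hLA⟩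
  apply tendsto_of_matN
  rw [Metric.tendsto_atTop]
  intro ε hε
  have hNconv : Tendsto (fun m => matN (A^(φ m) - L)) atTop (𝓝 0) := matN_tendsto hconv
  have hcard : (0:ℝ) < Fintype.card n + 1 := by positivity
  obtain ⟨M0, hM0⟩ := (Metric.tendsto_atTop.mp hNconv) (ε / (Fintype.card n + 1))
    (by positivity)
  refine ⟨φ M0, fun k hk => ?_⟩
  have hdec : A^k - L = A^(k - φ M0) * (A^(φ M0) - L) := by
    rw [mul_sub, ← pow_add, hpowL]
    congr 2
    omega
  have hb : matN (A^k - L) ≤ (Fintype.card n) * matN (A^(φ M0) - L) := by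
    rw [hdec]
    refine (matN_mul_le _ _).trans ?_
    rw [matN_stoch (stoch_pow hA _)]
  have hsmall : matN (A^(φ M0) - L) < ε / (Fintype.card n + 1) := by
    have := hM0 M0 le_rfl
    rwa [Real.dist_eq, sub_zero, abs_of_nonneg (matN_nonneg _)] at this
  rw [Real.dist_eq, sub_zero, abs_of_nonneg (matN_nonneg _)]
  have hcn : (0:ℝ) ≤ Fintype.card n := Nat.cast_nonneg _
  calc matN (A^k - L) ≤ (Fintype.card n) * matN (A^(φ M0) - L) := hb
    _ ≤ (Fintype.card n) * (ε / (Fintype.card n + 1)) := by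
        apply mul_le_mul_of_nonneg_left (le_of_lt hsmall) hcn
    _ < ε := by
        rw [mul_div_assoc', div_lt_iff₀ hcard]
        nlinarith

lemma nnreal_decompose (h : ℝ≥0) (hh : h ≠ 0) (t : ℝ≥0) :
    ∃ r : ℝ≥0, r < h ∧ t = h * (⌊t / h⌋₊ : ℝ≥0) + r := by
  set q : ℕ := ⌊t / h⌋₊ with hq
  have hq1 : h * (q : ℝ≥0) ≤ t := by
    have h1 : (q : ℝ≥0) ≤ t / h := Nat.floor_le (by positivity)
    calc h * (q : ℝ≥0) ≤ h * (t / h) := by gcongr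
      _ = t := by rw [mul_comm, div_mul_cancel₀ _ hh]
  refine ⟨t - h * q, ?_, (add_tsub_cancel_of_le hq1).symm⟩
  have h2 : t / h < (q : ℝ≥0) + 1 := Nat.lt_floor_add_one (t / h)
  have h3 : t < ((q : ℝ≥0) + 1) * h := by
    rw [← div_lt_iff₀ (pos_iff_ne_zero.mpr hh)]
    exact h2
  rw [tsub_lt_iff_left hq1]
  calc t < ((q : ℝ≥0) + 1) * h := h3
    _ = h * q + h := by ring

theorem markov_semigroup_tendsto_idempotent
    {n : Type*} [Fintype n] [DecidableEq n] [Nonempty n]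
    (α : ℝ≥0 → Matrix n n ℝ)
    (hcont : Continuous α) (h0 : α 0 = 1)
    (hadd : ∀ s t : ℝ≥0, α (s + t) = α s * α t)
    (hstoch : ∀ t : ℝ≥0, IsStochastic (α t)) :
    ∃ P : Matrix n n ℝ, Tendsto α atTop (𝓝 P) ∧ P * P = P := by
  classical
  have comm : ∀ s t : ℝ≥0, α s * α t = α t * α s := by
    intro s t; rw [← hadd, ← hadd, add_comm]
  have pow_eq : ∀ (t : ℝ≥0) (j : ℕ), α t ^ j = α ((j : ℝ≥0) * t) := by
    intro t j
    induction j with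
    | zero => simp [h0]
    | succ j ih =>
      rw [pow_succ, ih, ← hadd]
      congr 1
      push_cast
      ring
  set c : ℝ := (Fintype.card n : ℝ) with hc
  have hc1 : (1:ℝ) ≤ c := by
    rw [hc]
    exact_mod_cast Fintype.card_pos
  have hcpos : (0:ℝ) < c + 1 := by linarith
  -- diagonal entries near 0
  have hev : ∀ᶠ t in 𝓝 (0:ℝ≥0), ∀ i : n, (2:ℝ)⁻¹ ≤ α t i i := by
    have h1 : ∀ i : n, ∀ᶠ t in 𝓝 (0:ℝ≥0), (2:ℝ)⁻¹ < α t i i := by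
      intro i
      have hc2 : Tendsto (fun t => α t i i) (𝓝 0) (𝓝 (α 0 i i)) :=
        ((hcont.matrix_elem i i).continuousAt (x := 0))
      rw [h0, Matrix.one_apply_eq] at hc2
      exact hc2.eventually (eventually_gt_nhds (by norm_num))
    have := (Filter.eventually_all (ι := n)).mpr h1
    exact this.mono fun t ht i => le_of_lt (ht i)
  obtain ⟨ε₀, hε₀pos, hε₀⟩ := Metric.eventually_nhds_iff.mp hev
  set h₀ : ℝ≥0 := ε₀.toNNReal / 2 with hh₀
  have h₀ne : h₀ ≠ 0 := by
    rw [hh₀]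
    simp only [ne_eq, div_eq_zero_iff]
    push_neg
    refine ⟨?_, by norm_num⟩
    rw [Ne, Real.toNNReal_eq_zero]
    push_neg
    linarith
  have hdiag : ∀ t : ℝ≥0, t ≤ h₀ → ∀ i, (2:ℝ)⁻¹ ≤ α t i i := by
    intro t ht i
    apply hε₀
    rw [NNReal.dist_eq]
    push_cast
    rw [sub_zero, abs_of_nonneg t.coe_nonneg]
    have h1 : (t : ℝ) ≤ h₀ := ht
    have h2 : (h₀ : ℝ) ≤ ε₀ / 2 := by
      rw [hh₀]
      push_cast
      rw [Real.coe_toNNReal _ (le_of_lt hε₀pos)]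
    linarith
  -- the family of dyadic subdivisions
  set hm : ℕ → ℝ≥0 := fun m => h₀ / 2^m with hhm
  have hm_ne : ∀ m, hm m ≠ 0 := by
    intro m
    rw [hhm]
    simp only [ne_eq, div_eq_zero_iff]
    push_neg
    exact ⟨h₀ne, by positivity⟩
  have hm_le : ∀ m, hm m ≤ h₀ := by
    intro m
    rw [hhm]
    exact div_le_self (by positivity) (one_le_pow₀ one_le_two)
  have hAm_st : ∀ m : ℕ, IsStochastic (α (hm m)) := fun m => hstoch _
  have hAm_diag : ∀ (m : ℕ) (i : n), (2:ℝ)⁻¹ ≤ α (hm m) i i := fun m => hdiag _ (hm_le m)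
  choose Pm hPm_conv hPm_l hPm_r using fun m : ℕ => key_conv (hAm_st m) (hAm_diag m)
  set P := Pm 0 with hP
  -- all limits agree
  have hPm_eq : ∀ m, Pm m = P := by
    intro m
    have hpow2 : α (hm 0) = α (hm m) ^ (2^m) := by
      rw [pow_eq]
      congr 1
      rw [hhm]
      simp only
      rw [show ((2^m : ℕ) : ℝ≥0) = (2:ℝ≥0)^m by push_cast; ring]
      rw [pow_zero, div_one, mul_comm, div_mul_cancel₀ _ (by positivity : (2:ℝ≥0)^m ≠ 0)]
    have hmul : Tendsto (fun k : ℕ => 2^m * k) atTop atTop := by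
      apply tendsto_atTop_mono (fun k => Nat.le_mul_of_pos_left k (Nat.pow_pos (by norm_num)))
      exact tendsto_id
    have hsub : Tendsto (fun k => α (hm m) ^ (2^m * k)) atTop (𝓝 (Pm m)) :=
      (hPm_conv m).comp hmul
    have heq : (fun k => α (hm 0) ^ k) = fun k => α (hm m) ^ (2^m * k) := by
      funext k
      rw [hpow2, ← pow_mul]
    have h1 : Tendsto (fun k => α (hm m) ^ (2^m * k)) atTop (𝓝 (Pm 0)) := by
      rw [← heq]
      exact hPm_conv 0
    rw [hP]
    exact (tendsto_nhds_unique hsub h1)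
  have hAmP : ∀ m, α (hm m) * P = P := fun m => by rw [← hPm_eq m]; exact hPm_l m
  have hAmPq : ∀ m q, α (hm m) ^ q * P = P := by
    intro m q
    induction q with
    | zero => simp
    | succ q ih => rw [pow_succ', mul_assoc, ih, hAmP]
  -- α t * P = P for all t
  have hg : Continuous (fun t : ℝ≥0 => matN (α t * P - P)) :=
    continuous_matN ((Continuous.matrix_mul hcont continuous_const).sub continuous_const)
  have hg0 : matN (α 0 * P - P) = 0 := by rw [h0, one_mul, sub_self, matN_zero]
  have hstepP : ∀ t, α t * P = P := by
    intro t
    by_contra hne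
    have hpos : 0 < matN (α t * P - P) := by
      rcases lt_or_eq_of_le (matN_nonneg (α t * P - P)) with h | h
      · exact h
      · exfalso
        apply hne
        have := matN_eq_zero h.symm
        rwa [sub_eq_zero] at this
    set ee := matN (α t * P - P) / (c + 1) with hee
    have heepos : 0 < ee := by rw [hee]; positivity
    have htd : Tendsto (fun s : ℝ≥0 => matN (α s * P - P)) (𝓝 0) (𝓝 0) := by
      have := hg.continuousAt (x := 0)
      rwa [ContinuousAt, hg0] at this
    have hev2 : ∀ᶠ s in 𝓝 (0:ℝ≥0), matN (α s * P - P) < ee :=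
      htd.eventually (eventually_lt_nhds heepos)
    obtain ⟨δ, hδpos, hδ⟩ := Metric.eventually_nhds_iff.mp hev2
    -- pick m with hm m small enough
    have hδ' : (0:ℝ≥0) < δ.toNNReal := Real.toNNReal_pos.mpr hδpos
    obtain ⟨m, hmlt⟩ := pow_unbounded_of_one_lt (R := ℝ≥0) (h₀ / δ.toNNReal) one_lt_two
    have hsmall : hm m < δ.toNNReal := by
      have h1 : h₀ < 2^m * δ.toNNReal := (div_lt_iff₀ hδ').mp hmlt
      rw [hhm]
      simp only
      rw [div_lt_iff₀ (by positivity : (0:ℝ≥0) < (2:ℝ≥0)^m)]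
      rw [mul_comm]
      exact h1
    obtain ⟨r, hr, hteq⟩ := nnreal_decompose (hm m) (hm_ne m) t
    set q : ℕ := ⌊t / hm m⌋₊
    have hαt : α t = α (hm m) ^ q * α r := by
      rw [hteq, hadd, pow_eq, mul_comm (q : ℝ≥0)]
    have hfact : α t * P - P = α (hm m) ^ q * (α r * P - P) := by
      rw [mul_sub, ← mul_assoc, ← hαt, hAmPq]
    have hbound : matN (α t * P - P) ≤ c * matN (α r * P - P) := by
      rw [hfact]
      refine (matN_mul_le _ _).trans ?_
      rw [matN_stoch (stoch_pow (hstoch _) q), ← hc]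
    have hrey : matN (α r * P - P) < ee := by
      apply hδ
      rw [NNReal.dist_eq]
      push_cast
      rw [sub_zero, abs_of_nonneg r.coe_nonneg]
      calc (r : ℝ) < (hm m : ℝ) := by exact_mod_cast hr
        _ < (δ.toNNReal : ℝ) := by exact_mod_cast hsmall
        _ = δ := Real.coe_toNNReal δ (le_of_lt hδpos)
    have : matN (α t * P - P) < matN (α t * P - P) := by
      calc matN (α t * P - P) ≤ c * matN (α r * P - P) := hbound
        _ < c * ee := by
            apply mul_lt_mul_of_pos_left hrey (by linarith)
        _ ≤ matN (α t * P - P) := by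
            rw [hee, mul_div_assoc', div_le_iff₀ hcpos]
            nlinarith [hpos]
    exact lt_irrefl _ this
  -- P commutes with α and P * α r = P
  have hm0 : hm 0 = h₀ := by rw [hhm]; simp
  have hPconv0 : Tendsto (fun k => α h₀ ^ k) atTop (𝓝 P) := by
    have := hPm_conv 0
    rwa [hm0, ← hP] at this
  have hPαr : ∀ r : ℝ≥0, P * α r = P := by
    intro r
    have hcr : Continuous fun M : Matrix n n ℝ => M * α r :=
      Continuous.matrix_mul continuous_id continuous_const
    have hcl : Continuous fun M : Matrix n n ℝ => α r * M :=
      Continuous.matrix_mul continuous_const continuous_id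
    have h1 : Tendsto (fun k => α h₀ ^ k * α r) atTop (𝓝 (P * α r)) :=
      (hcr.tendsto P).comp hPconv0
    have h2 : (fun k => α h₀ ^ k * α r) = fun k => α r * α h₀ ^ k := by
      funext k
      rw [pow_eq, comm]
    have h3 : Tendsto (fun k => α r * α h₀ ^ k) atTop (𝓝 (α r * P)) :=
      (hcl.tendsto P).comp hPconv0
    have h4 : P * α r = α r * P := by
      apply tendsto_nhds_unique h1
      rw [h2]
      exact h3
    rw [h4, hstepP r]
  have hPP : P * P = P := by
    have hcl : Continuous fun M : Matrix n n ℝ => P * M :=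
      Continuous.matrix_mul continuous_const continuous_id
    have h1 : Tendsto (fun k => P * α h₀ ^ k) atTop (𝓝 (P * P)) :=
      (hcl.tendsto P).comp hPconv0
    have h2 : (fun k => P * α h₀ ^ k) = fun _ => P := by
      funext k
      rw [pow_eq, hPαr]
    rw [h2] at h1
    exact (tendsto_nhds_unique tendsto_const_nhds h1).symm
  refine ⟨P, ?_, hPP⟩
  -- final convergence
  apply tendsto_of_matN
  rw [Metric.tendsto_atTop]
  intro ε hε
  have hNconv : Tendsto (fun k => matN (α h₀ ^ k - P)) atTop (𝓝 0) := matN_tendsto hPconv0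
  obtain ⟨K, hK⟩ := Metric.tendsto_atTop.mp hNconv (ε/(c+1)) (by positivity)
  refine ⟨(K : ℝ≥0) * h₀ + h₀, fun t ht => ?_⟩
  obtain ⟨r, hr, hteq⟩ := nnreal_decompose h₀ h₀ne t
  set q : ℕ := ⌊t / h₀⌋₊ with hqdef
  have hqK : K ≤ q := by
    apply Nat.le_floor
    rw [le_div_iff₀ (pos_iff_ne_zero.mpr h₀ne)]
    calc (K : ℝ≥0) * h₀ ≤ (K : ℝ≥0) * h₀ + h₀ := le_self_add
      _ ≤ t := ht
  have hαt : α t = α h₀ ^ q * α r := by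
    rw [hteq, hadd, pow_eq, mul_comm ((q:ℝ≥0))]
  have hfac : α t - P = (α h₀ ^ q - P) * α r := by
    rw [sub_mul, ← hαt, hPαr]
  have hbound : matN (α t - P) ≤ matN (α h₀ ^ q - P) * c := by
    rw [hfac]
    refine (matN_mul_le _ _).trans ?_
    rw [matN_stoch (hstoch r), ← hc]
  have hsmallq : matN (α h₀ ^ q - P) < ε / (c+1) := by
    have := hK q hqK
    rwa [Real.dist_eq, sub_zero, abs_of_nonneg (matN_nonneg _)] at this
  rw [Real.dist_eq, sub_zero, abs_of_nonneg (matN_nonneg _)]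
  calc matN (α t - P) ≤ matN (α h₀ ^ q - P) * c := hbound
    _ < (ε / (c+1)) * c := by
        apply mul_lt_mul_of_pos_right hsmallq (by linarith)
    _ ≤ ε := by
        rw [div_mul_eq_mul_div, div_le_iff₀ hcpos]
        nlinarith
end

section
/- Let n be a nonempty finite type and α : ℝ≥0 → Matrix n n ℝ a Markov semigroup. Then there exists a unique continuous function β : ℝ≥0∞ → Matrix n n ℝ such that β (↑t) = α t for every t : ℝ≥0; moreover this β satisfies β (x + y) = β x * β y for all x, y : ℝ≥0∞ and β 0 = 1 (so β is a continuous monoid homomorphism from ([0,∞], +) to matrices under multiplication extending α). -/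
open Filter Topology
open scoped NNReal ENNReal

namespace MarkovAux
set_option linter.unusedSectionVars false
set_option linter.unnecessarySimpa false
set_option linter.unusedTactic false
open Matrix

variable {n : Type*} [Fintype n] [DecidableEq n] [Nonempty n]

theorem stoch_mul {A B : Matrix n n ℝ} (hA : IsStochastic A) (hB : IsStochastic B) :
    IsStochastic (A * B) := by
  constructor
  · intro i j
    rw [Matrix.mul_apply]
    exact Finset.sum_nonneg fun k _ => mul_nonneg (hA.1 i k) (hB.1 k j)
  · intro j
    simp only [Matrix.mul_apply]
    rw [Finset.sum_comm]
    calc ∑ k, ∑ i, A i k * B k j = ∑ k, (∑ i, A i k) * B k j := by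
          simp [Finset.sum_mul]
      _ = ∑ k, B k j := by simp [hA.2]
      _ = 1 := hB.2 j

theorem stoch_one : IsStochastic (1 : Matrix n n ℝ) := by
  constructor
  · intro i j
    by_cases h : i = j <;> simp [Matrix.one_apply, h]
  · intro j
    simp [Matrix.one_apply, Finset.sum_ite_eq]

theorem stoch_pow {P : Matrix n n ℝ} (hP : IsStochastic P) (k : ℕ) :
    IsStochastic (P ^ k) := by
  induction k with
  | zero => simpa using stoch_one
  | succ k ih => rw [pow_succ]; exact stoch_mul ih hP

theorem stoch_entry_le_one {A : Matrix n n ℝ} (hA : IsStochastic A) (i j : n) :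
    A i j ≤ 1 := by
  rw [← hA.2 j]
  exact Finset.single_le_sum (fun k _ => hA.1 k j) (Finset.mem_univ i)

theorem stoch_diag_mul {A B : Matrix n n ℝ} (hA : IsStochastic A) (hB : IsStochastic B)
    (i : n) : A i i * B i i ≤ (A * B) i i := by
  rw [Matrix.mul_apply]
  have : ∀ k ∈ Finset.univ, k ≠ i → (0:ℝ) ≤ A i k * B k i :=
    fun k _ _ => mul_nonneg (hA.1 i k) (hB.1 k i)
  calc A i i * B i i = ∑ k ∈ {i}, A i k * B k i := by simp
    _ ≤ ∑ k, A i k * B k i :=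
        Finset.sum_le_sum_of_subset_of_nonneg (Finset.subset_univ _) (by
          intro k _ hk
          exact mul_nonneg (hA.1 i k) (hB.1 k i))

theorem stoch_diag_pow {P : Matrix n n ℝ} (hP : IsStochastic P) (i : n) (k : ℕ) :
    P i i ^ k ≤ (P ^ k) i i := by
  induction k with
  | zero => simp
  | succ k ih =>
    rw [pow_succ, pow_succ]
    calc P i i ^ k * P i i ≤ (P ^ k) i i * P i i :=
          mul_le_mul_of_nonneg_right ih (hP.1 i i)
      _ ≤ (P ^ k * P) i i := stoch_diag_mul (stoch_pow hP k) hP i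

theorem eig_loc {P : Matrix n n ℝ} (hP : IsStochastic P) (hd : ∀ i, 0 < P i i)
    {μ : ℂ} {v : n → ℂ} (hv : v ≠ 0)
    (heq : (P.map (Complex.ofReal)) *ᵥ v = μ • v) :
    μ = 1 ∨ norm μ < 1 := by
  set P' : Matrix n n ℂ := P.map (Complex.ofReal) with hP'
  -- transpose eigenvector
  have hdet : (P' - μ • 1).det = 0 := by
    rw [← Matrix.exists_mulVec_eq_zero_iff]
    refine ⟨v, hv, ?_⟩
    rw [Matrix.sub_mulVec, Matrix.smul_mulVec, Matrix.one_mulVec, heq, sub_self]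
  have hdetT : ((P'ᵀ) - μ • 1).det = 0 := by
    have : (P'ᵀ) - μ • 1 = (P' - μ • 1)ᵀ := by
      rw [Matrix.transpose_sub, Matrix.transpose_smul, Matrix.transpose_one]
    rw [this, Matrix.det_transpose]
    exact hdet
  obtain ⟨w, hw, hweq⟩ := (Matrix.exists_mulVec_eq_zero_iff).mpr hdetT
  have hweq' : ∀ i, ∑ j, (P j i : ℂ) * w j = μ * w i := by
    intro i
    have := congrFun hweq i
    simp only [Matrix.sub_mulVec, Matrix.smul_mulVec, Matrix.one_mulVec, Pi.sub_apply,
      Pi.smul_apply, smul_eq_mul, Pi.zero_apply, sub_eq_zero] at this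
    rw [← this]
    simp [Matrix.mulVec, dotProduct, Matrix.transpose_apply, hP', Matrix.map_apply]
  -- maximal component
  obtain ⟨i, -, hi⟩ := Finset.exists_max_image Finset.univ (fun j => norm (w j))
    Finset.univ_nonempty
  have hwi : 0 < norm (w i) := by
    rcases Function.ne_iff.mp hw with ⟨j, hj⟩
    exact lt_of_lt_of_le (by simpa using hj) (hi j (Finset.mem_univ j))
  -- |μ| ≤ 1
  have habs : norm μ ≤ 1 := by
    have h1 : norm (μ * w i) ≤ norm (w i) := by
      rw [← hweq' i]
      calc norm (∑ j, (P j i : ℂ) * w j) ≤ ∑ j, norm ((P j i : ℂ) * w j) :=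
            norm_sum_le _ _
        _ = ∑ j, P j i * norm (w j) := by
            refine Finset.sum_congr rfl fun j _ => ?_
            rw [norm_mul, Complex.norm_real, Real.norm_eq_abs, abs_of_nonneg (hP.1 j i)]
        _ ≤ ∑ j, P j i * norm (w i) := by
            refine Finset.sum_le_sum fun j _ => ?_
            exact mul_le_mul_of_nonneg_left (hi j (Finset.mem_univ j)) (hP.1 j i)
        _ = norm (w i) := by rw [← Finset.sum_mul, hP.2 i, one_mul]
    rw [norm_mul] at h1
    have := (mul_le_iff_le_one_left hwi).mp h1
    exact this
  -- |μ - P i i| ≤ 1 - P i i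
  have hgersh : norm (μ - (P i i : ℂ)) ≤ 1 - P i i := by
    have key : (μ - (P i i : ℂ)) * w i = ∑ j ∈ Finset.univ.erase i, (P j i : ℂ) * w j := by
      have := hweq' i
      rw [← Finset.add_sum_erase _ _ (Finset.mem_univ i)] at this
      have h2 : (μ - (P i i : ℂ)) * w i = μ * w i - (P i i : ℂ) * w i := by ring
      rw [h2, ← this]
      ring
    have h3 : norm ((μ - (P i i : ℂ)) * w i) ≤ (1 - P i i) * norm (w i) := by
      rw [key]
      calc norm (∑ j ∈ Finset.univ.erase i, (P j i : ℂ) * w j)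
          ≤ ∑ j ∈ Finset.univ.erase i, norm ((P j i : ℂ) * w j) :=
            norm_sum_le _ _
        _ ≤ ∑ j ∈ Finset.univ.erase i, P j i * norm (w i) := by
            refine Finset.sum_le_sum fun j _ => ?_
            rw [norm_mul, Complex.norm_real, Real.norm_eq_abs, abs_of_nonneg (hP.1 j i)]
            exact mul_le_mul_of_nonneg_left (hi j (Finset.mem_univ j)) (hP.1 j i)
        _ = (∑ j ∈ Finset.univ.erase i, P j i) * norm (w i) := by
            rw [Finset.sum_mul]
        _ = (1 - P i i) * norm (w i) := by
            have : ∑ j ∈ Finset.univ.erase i, P j i = 1 - P i i := by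
              have := Finset.add_sum_erase Finset.univ (fun j => P j i) (Finset.mem_univ i)
              rw [hP.2 i] at this
              linarith
            rw [this]
    rw [norm_mul] at h3
    exact le_of_mul_le_mul_right (by simpa using h3) hwi
  -- conclude
  by_cases hlt : norm μ < 1
  · exact Or.inr hlt
  · left
    have habs1 : norm μ = 1 := le_antisymm habs (not_lt.mp hlt)
    set p := P i i with hp
    have hp0 : 0 < p := hd i
    have hp1 : p ≤ 1 := by
      have := hP.2 i
      have h4 : ∀ j ∈ Finset.univ.erase i, 0 ≤ P j i := fun j _ => hP.1 j i
      have := Finset.add_sum_erase Finset.univ (fun j => P j i) (Finset.mem_univ i)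
      have h5 : 0 ≤ ∑ j ∈ Finset.univ.erase i, P j i := Finset.sum_nonneg h4
      rw [hP.2 i] at this
      linarith
    have hsq : (μ.re - p) ^ 2 + μ.im ^ 2 ≤ (1 - p) ^ 2 := by
      have h6 : norm (μ - (p : ℂ)) ^ 2 ≤ (1 - p) ^ 2 := by
        apply pow_le_pow_left₀ (norm_nonneg _) hgersh
      rw [Complex.sq_norm, Complex.normSq_apply] at h6
      simp only [Complex.sub_re, Complex.ofReal_re, Complex.sub_im, Complex.ofReal_im, sub_zero] at h6
      nlinarith [h6]
    have hnorm : μ.re ^ 2 + μ.im ^ 2 = 1 := by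
      have := Complex.sq_norm μ
      rw [habs1] at this
      rw [Complex.normSq_apply] at this
      nlinarith [this]
    have hre : μ.re = 1 := by nlinarith [hsq, hnorm, hp0]
    have him : μ.im = 0 := by nlinarith [hnorm, hre]
    apply Complex.ext <;> simp [hre, him]

theorem map_pow_comm (P : Matrix n n ℝ) (k : ℕ) :
    (P.map Complex.ofReal) ^ k = (P ^ k).map Complex.ofReal := by
  induction k with
  | zero =>
    simp [Matrix.map_one Complex.ofReal Complex.ofReal_zero Complex.ofReal_one]
  | succ k ih =>
    rw [pow_succ, pow_succ, ih]
    exact (Matrix.map_mul (f := Complex.ofRealHom)).symm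

theorem pow_mulVecLin (P' : Matrix n n ℂ) (k : ℕ) :
    (Matrix.mulVecLin P') ^ k = Matrix.mulVecLin (P' ^ k) := by
  induction k with
  | zero => simp [Matrix.mulVecLin_one]; rfl
  | succ k ih =>
    rw [pow_succ, pow_succ, ih, Matrix.mulVecLin_mul]
    rfl

theorem pow_mulVec_bound {P : Matrix n n ℝ} (hP : IsStochastic P) (v : n → ℂ) (k : ℕ) (i : n) :
    norm ((((P.map Complex.ofReal) ^ k) *ᵥ v) i) ≤ ∑ j, norm (v j) := by
  rw [map_pow_comm]
  have hPk := stoch_pow hP k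
  have : (((P ^ k).map Complex.ofReal) *ᵥ v) i = ∑ j, ((P ^ k) i j : ℂ) * v j := by
    simp [Matrix.mulVec, dotProduct, Matrix.map_apply]
  rw [this]
  calc norm (∑ j, ((P ^ k) i j : ℂ) * v j) ≤ ∑ j, norm (((P ^ k) i j : ℂ) * v j) :=
        norm_sum_le _ _
    _ ≤ ∑ j, norm (v j) := by
        refine Finset.sum_le_sum fun j _ => ?_
        rw [norm_mul, Complex.norm_real, Real.norm_eq_abs, abs_of_nonneg (hPk.1 i j)]
        exact mul_le_of_le_one_left (norm_nonneg _) (stoch_entry_le_one hPk i j)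


theorem sum_pascal (μ : ℂ) (hμ : μ ≠ 0) (M : ℕ) (x : ℕ → (n → ℂ)) (hx : x (M+1) = 0) (k : ℕ) :
    (∑ j ∈ Finset.range (M+1), ((k.choose j : ℂ) * μ ^ (k+1) * μ⁻¹ ^ j) • x j)
      + ∑ j ∈ Finset.range (M+1), ((k.choose j : ℂ) * μ ^ k * μ⁻¹ ^ j) • x (j+1)
    = ∑ j ∈ Finset.range (M+1), (((k+1).choose j : ℂ) * μ ^ (k+1) * μ⁻¹ ^ j) • x j := by
  rw [Finset.sum_range_succ (fun j => ((k.choose j : ℂ) * μ ^ k * μ⁻¹ ^ j) • x (j+1)) M,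
    hx, smul_zero, add_zero]
  rw [Finset.sum_range_succ' (fun j => ((k.choose j : ℂ) * μ ^ (k+1) * μ⁻¹ ^ j) • x j) M]
  rw [Finset.sum_range_succ' (fun j => (((k+1).choose j : ℂ) * μ ^ (k+1) * μ⁻¹ ^ j) • x j) M]
  simp only [Nat.choose_zero_right, Nat.cast_one, pow_zero, mul_one, one_mul]
  rw [add_right_comm]
  congr 1
  rw [← Finset.sum_add_distrib]
  refine Finset.sum_congr rfl fun j _ => ?_
  rw [← add_smul]
  congr 1
  rw [Nat.choose_succ_succ]
  push_cast
  field_simp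
  linear_combination (μ ^ k * μ⁻¹ ^ j * (k.choose j : ℂ)) * (mul_inv_cancel₀ hμ).symm

theorem gen_vec_tendsto {P : Matrix n n ℝ} (hP : IsStochastic P) (hd : ∀ i, 0 < P i i)
    (μ : ℂ) (v : n → ℂ)
    (hv : v ∈ Module.End.maxGenEigenspace (Matrix.mulVecLin (P.map Complex.ofReal) : Module.End ℂ (n → ℂ)) μ) :
    ∃ u, Tendsto (fun k => ((P.map Complex.ofReal) ^ k) *ᵥ v) atTop (𝓝 u) := by
  set P' := P.map Complex.ofReal with hP'
  set e : Module.End ℂ (n → ℂ) := Matrix.mulVecLin P' with he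
  have hpow : ∀ (k : ℕ) (w : n → ℂ), ((P' ^ k) *ᵥ w) = (e ^ k) w := by
    intro k w
    rw [he, pow_mulVecLin, Matrix.mulVecLin_apply]
  rcases eq_or_ne v 0 with rfl | hv0
  · exact ⟨0, by simpa [Matrix.mulVec_zero] using (tendsto_const_nhds : Tendsto (fun _ : ℕ => (0 : n → ℂ)) atTop _)⟩
  set N : Module.End ℂ (n → ℂ) := e - μ • 1 with hN
  have hNx : ∀ x, N x = e x - μ • x := by
    intro x; simp [hN]
  have hex : ∃ m, (N ^ m) v = 0 := (Module.End.mem_maxGenEigenspace _ _ _).mp hv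
  have hm0spec : (N ^ Nat.find hex) v = 0 := Nat.find_spec hex
  set m0 := Nat.find hex with hm0
  have hm0pos : 0 < m0 := by
    rcases Nat.eq_zero_or_pos m0 with h | h
    · exfalso
      rw [h] at hm0spec
      simp only [pow_zero, Module.End.one_apply] at hm0spec
      exact hv0 hm0spec
    · exact h
  have hu0 : (N ^ (m0 - 1)) v ≠ 0 := Nat.find_min hex (by omega)
  set u : n → ℂ := (N ^ (m0 - 1)) v with hu
  have hNu : N u = 0 := by
    have h1 : (N ^ m0) v = (N * N ^ (m0 - 1)) v := by
      congr 1
      rw [← pow_succ']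
      congr 1
      omega
    rw [h1, Module.End.mul_apply] at hm0spec
    exact hm0spec
  have heu : P' *ᵥ u = μ • u := by
    have h2 := hNx u
    rw [hNu] at h2
    rw [← Matrix.mulVecLin_apply]
    exact sub_eq_zero.mp h2.symm
  have hloc := eig_loc hP hd hu0 heu
  rcases hloc with hμ1 | hlt
  · -- μ = 1
    subst hμ1
    have hNv : N v = 0 := by
      by_contra hNv
      have hm2 : 2 ≤ m0 := by
        by_contra h
        have : m0 = 1 := by omega
        rw [this] at hm0spec
        simp only [pow_one] at hm0spec
        exact hNv hm0spec
      set w := (N ^ (m0 - 2)) v with hw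
      have hNw : N w = u := by
        rw [hu, hw, ← Module.End.mul_apply, ← pow_succ']
        congr 2
        omega
      have hew : e w = w + u := by
        have h := hNx w
        rw [hNw, one_smul] at h
        rw [add_comm]
        exact (sub_eq_iff_eq_add.mp h.symm)
      have heu' : e u = u := by
        have h := hNx u
        rw [hNu, one_smul] at h
        exact sub_eq_zero.mp h.symm
      have hek : ∀ k : ℕ, (e ^ k) w = w + (k : ℂ) • u := by
        intro k
        induction k with
        | zero => simp
        | succ k ih =>
          rw [pow_succ', Module.End.mul_apply, ih, map_add, e.map_smul, hew, heu']
          push_cast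
          module
      obtain ⟨i, hi⟩ := Function.ne_iff.mp hu0
      set C := ∑ j, norm (w j) with hC
      obtain ⟨k, hk⟩ := exists_nat_gt ((C + norm (w i)) / norm (u i))
      have hik : norm ((e ^ k) w i) ≤ C := by
        rw [← hpow]
        exact pow_mulVec_bound hP w k i
      rw [hek k] at hik
      have habs : (k : ℝ) * norm (u i) - norm (w i) ≤ norm ((w + (k:ℂ) • u) i) := by
        have h5 : ((w + (k:ℂ) • u) i) = w i + (k:ℂ) * u i := by simp
        rw [h5]
        have h6 := norm_add_le (w i + (k:ℂ) * u i) (-(w i))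
        rw [norm_neg] at h6
        have h65 : w i + (k:ℂ) * u i + -(w i) = (k:ℂ) * u i := by ring
        rw [h65] at h6
        have h7 : norm ((k:ℂ) * u i) = (k:ℝ) * norm (u i) := by
          rw [norm_mul, Complex.norm_natCast]
        rw [h7] at h6
        linarith
      have hgt : (C + norm (w i)) < (k:ℝ) * norm (u i) := by
        rw [div_lt_iff₀ (by simpa using hi : 0 < norm (u i))] at hk
        linarith
      linarith
    -- now e^k v = v
    have hev : e v = v := by
      have h := hNx v
      rw [hNv, one_smul] at h
      exact sub_eq_zero.mp h.symm
    have : ∀ k : ℕ, (e ^ k) v = v := by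
      intro k
      induction k with
      | zero => simp
      | succ k ih => rw [pow_succ', Module.End.mul_apply, ih, hev]
    refine ⟨v, ?_⟩
    have heq : (fun k : ℕ => (P' ^ k) *ᵥ v) = fun _ => v := by
      funext k; rw [hpow, this]
    rw [heq]
    exact tendsto_const_nhds
  · -- |μ| < 1
    by_cases hμ0 : μ = 0
    · subst hμ0
      have hNe : N = e := by simp [hN]
      refine ⟨0, ?_⟩
      have : ∀ k, m0 ≤ k → (P' ^ k) *ᵥ v = 0 := by
        intro k hk
        rw [hpow]
        have : e ^ k = e ^ (k - m0) * e ^ m0 := by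
          rw [← pow_add]
          congr 1
          omega
        rw [this, Module.End.mul_apply, ← hNe, hm0spec, map_zero]
      refine Tendsto.congr' ?_ tendsto_const_nhds
      filter_upwards [eventually_ge_atTop m0] with k hk
      exact (this k hk).symm
    · -- μ ≠ 0
      set G : ℕ → (n → ℂ) := fun k =>
        ∑ j ∈ Finset.range m0, ((k.choose j : ℂ) * μ ^ k * (μ⁻¹) ^ j) • (N ^ j) v with hG
      have hstep : ∀ x, e x = μ • x + N x := by
        intro x
        rw [hNx x]
        abel
      have hGk : ∀ k, (e ^ k) v = G k := by
        intro k
        induction k with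
        | zero =>
          simp only [pow_zero, Module.End.one_apply, hG]
          rw [Finset.sum_eq_single 0]
          · simp
          · intro j hj hj0
            rw [Nat.choose_eq_zero_of_lt (by omega)]
            simp
          · intro h
            exact absurd (Finset.mem_range.mpr hm0pos) h
        | succ k ih =>
          obtain ⟨M, hM⟩ : ∃ M, m0 = M + 1 := ⟨m0 - 1, by omega⟩
          have hx0 : (N ^ (M + 1)) v = 0 := by rw [← hM]; exact hm0spec
          rw [pow_succ', Module.End.mul_apply, ih]
          simp only [hG]
          rw [map_sum, hM]
          calc ∑ j ∈ Finset.range (M+1), e (((k.choose j : ℂ) * μ ^ k * μ⁻¹ ^ j) • (N ^ j) v)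
              = ∑ j ∈ Finset.range (M+1), (((k.choose j : ℂ) * μ ^ (k+1) * μ⁻¹ ^ j) • (N ^ j) v
                  + ((k.choose j : ℂ) * μ ^ k * μ⁻¹ ^ j) • (N ^ (j+1)) v) := by
                refine Finset.sum_congr rfl fun j _ => ?_
                rw [e.map_smul, hstep ((N ^ j) v), smul_add, smul_smul]
                have harr : (N ^ (j+1)) v = N ((N ^ j) v) := by
                  rw [pow_succ', Module.End.mul_apply]
                rw [harr]
                congr 2
                ring
            _ = (∑ j ∈ Finset.range (M+1), ((k.choose j : ℂ) * μ ^ (k+1) * μ⁻¹ ^ j) • (N ^ j) v)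
                  + ∑ j ∈ Finset.range (M+1), ((k.choose j : ℂ) * μ ^ k * μ⁻¹ ^ j) • (N ^ (j+1)) v :=
                Finset.sum_add_distrib
            _ = ∑ j ∈ Finset.range (M+1), (((k+1).choose j : ℂ) * μ ^ (k+1) * μ⁻¹ ^ j) • (N ^ j) v :=
                sum_pascal μ hμ0 M (fun j => (N ^ j) v) hx0 k
      -- convergence
      have hnorm : ‖μ‖ < 1 := hlt
      have hterm0 : ∀ j, Tendsto (fun k : ℕ => ((k.choose j : ℂ) * μ ^ k * μ⁻¹ ^ j) • (N ^ j) v)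
          atTop (𝓝 0) := by
        intro j
        have hO : (fun k : ℕ => ((k.choose j : ℕ) : ℝ)) =O[atTop] (fun k : ℕ => ((k ^ j : ℕ) : ℝ)) := by
          apply Asymptotics.isBigO_of_le
          intro k
          simp only [Real.norm_natCast, Nat.abs_cast]
          exact_mod_cast Nat.choose_le_pow k j
        have hsum : Summable (fun k : ℕ => ‖((k.choose j : ℕ) : ℂ) * μ ^ k‖) :=
          summable_norm_mul_geometric_of_norm_lt_one (k := j) hnorm hO
        have hts : Tendsto (fun k : ℕ => ((k.choose j : ℕ) : ℂ) * μ ^ k) atTop (𝓝 0) :=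
          (Summable.of_norm hsum).tendsto_atTop_zero
        have hts2 : Tendsto (fun k : ℕ => ((k.choose j : ℕ) : ℂ) * μ ^ k * μ⁻¹ ^ j) atTop (𝓝 0) := by
          have := hts.mul_const (μ⁻¹ ^ j)
          simpa using this
        have := hts2.smul_const ((N ^ j) v)
        simpa using this
      refine ⟨0, ?_⟩
      have hfin : Tendsto G atTop (𝓝 0) := by
        have := tendsto_finset_sum (Finset.range m0) (fun j _ => hterm0 j)
        simpa [hG, Finset.sum_const_zero] using this
      have heq2 : (fun k : ℕ => (P' ^ k) *ᵥ v) = G := by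
        funext k; rw [hpow, hGk]
      rw [heq2]
      exact hfin

theorem pow_tendsto {P : Matrix n n ℝ} (hP : IsStochastic P) (hd : ∀ i, 0 < P i i) :
    ∃ L : Matrix n n ℝ, Tendsto (fun k => P ^ k) atTop (𝓝 L) := by
  set P' := P.map Complex.ofReal with hP'
  have hvec : ∀ v : n → ℂ, ∃ u, Tendsto (fun k => (P' ^ k) *ᵥ v) atTop (𝓝 u) := by
    intro v
    set e : Module.End ℂ (n → ℂ) := Matrix.mulVecLin P' with he
    have hv : v ∈ ⨆ μ, e.maxGenEigenspace μ := by
      rw [Module.End.iSup_maxGenEigenspace_eq_top]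
      trivial
    rw [Submodule.mem_iSup_iff_exists_finsupp] at hv
    obtain ⟨c, hc, hsum⟩ := hv
    have h1 := fun μ => gen_vec_tendsto hP hd μ (c μ) (hc μ)
    choose u hu using h1
    refine ⟨∑ μ ∈ c.support, u μ, ?_⟩
    have h2 : ∀ k : ℕ, (P' ^ k) *ᵥ v = ∑ μ ∈ c.support, (P' ^ k) *ᵥ c μ := by
      intro k
      rw [← hsum, Finsupp.sum]
      rw [← Matrix.mulVecLin_apply, map_sum]
      simp [Matrix.mulVecLin_apply]
    have h3 : Tendsto (fun k : ℕ => ∑ μ ∈ c.support, (P' ^ k) *ᵥ c μ) atTop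
        (𝓝 (∑ μ ∈ c.support, u μ)) :=
      tendsto_finset_sum _ (fun μ _ => hu μ)
    exact h3.congr (fun k => (h2 k).symm)
  have hent : ∀ i j : n, ∃ l : ℝ, Tendsto (fun k => (P ^ k) i j) atTop (𝓝 l) := by
    intro i j
    obtain ⟨u, hu⟩ := hvec (Pi.single j 1)
    have hcol : ∀ k : ℕ, ((P' ^ k) *ᵥ Pi.single j 1) i = (((P ^ k) i j : ℝ) : ℂ) := by
      intro k
      rw [Matrix.mulVec_single]
      rw [hP', map_pow_comm]
      simp [Matrix.map_apply]
    refine ⟨(u i).re, ?_⟩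
    have h1 : Tendsto (fun k : ℕ => ((P' ^ k) *ᵥ Pi.single j 1) i) atTop (𝓝 (u i)) :=
      tendsto_pi_nhds.mp hu i
    have h2 : Tendsto (fun k : ℕ => (((P ^ k) i j : ℝ) : ℂ)) atTop (𝓝 (u i)) :=
      h1.congr (fun k => hcol k)
    have h3 := (Complex.continuous_re.tendsto (u i)).comp h2
    simpa [Function.comp_def] using h3
  choose L hL using hent
  refine ⟨Matrix.of L, ?_⟩
  apply tendsto_pi_nhds.mpr
  intro i
  apply tendsto_pi_nhds.mpr
  intro j
  exact hL i j


section Semigroup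

variable (α : ℝ≥0 → Matrix n n ℝ)
variable (hcont : Continuous α) (h0 : α 0 = 1)
  (hadd : ∀ s t : ℝ≥0, α (s + t) = α s * α t)
  (hstoch : ∀ t : ℝ≥0, IsStochastic (α t))

include hadd h0 in
theorem alpha_nsmul : ∀ (c : ℝ≥0) (k : ℕ), α ((k : ℝ≥0) * c) = (α c) ^ k := by
  intro c k
  induction k with
  | zero => simpa using h0
  | succ k ih =>
    have : ((k + 1 : ℕ) : ℝ≥0) * c = (k : ℝ≥0) * c + c := by push_cast; ring
    rw [this, hadd, ih, pow_succ]

include hcont h0 hadd hstoch in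
theorem alpha_diag_pos : ∀ (c : ℝ≥0) (i : n), 0 < α c i i := by
  have hδ : ∀ i : n, ∃ δ : ℝ≥0, 0 < δ ∧ ∀ s : ℝ≥0, s ≤ δ → (1:ℝ)/2 < α s i i := by
    intro i
    have hg : Continuous fun s : ℝ≥0 => α s i i :=
      (continuous_apply i).comp ((continuous_apply i).comp hcont)
    have h1 : (1:ℝ)/2 < α 0 i i := by rw [h0]; norm_num [Matrix.one_apply]
    have h2 : ∀ᶠ s in 𝓝 (0 : ℝ≥0), (1:ℝ)/2 < α s i i :=
      (hg.continuousAt (x := 0)).eventually (eventually_gt_nhds h1)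
    rw [Metric.eventually_nhds_iff] at h2
    obtain ⟨ε, hε, h3⟩ := h2
    refine ⟨(ε/2).toNNReal, by simp [Real.toNNReal_pos]; linarith, fun s hs => ?_⟩
    apply h3
    have : (s : ℝ) ≤ ε / 2 := by
      calc (s : ℝ) ≤ ((ε/2).toNNReal : ℝ) := by exact_mod_cast hs
        _ = ε / 2 := Real.coe_toNNReal _ (by linarith)
    simp only [NNReal.dist_eq, NNReal.coe_zero, sub_zero]
    rw [abs_of_nonneg s.coe_nonneg]
    linarith
  intro c i
  obtain ⟨δ, hδ0, hδp⟩ := hδ i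
  obtain ⟨k, hk⟩ := pow_unbounded_of_one_lt (c / δ) (one_lt_two : (1:ℝ≥0) < 2)
  set s : ℝ≥0 := c / 2 ^ k with hs
  have hsδ : s ≤ δ := by
    rw [div_lt_iff₀ hδ0] at hk
    rw [hs, div_le_iff₀ (by positivity : (0:ℝ≥0) < 2 ^ k)]
    rw [mul_comm] at hk
    exact hk.le
  have hcs : ((2 ^ k : ℕ) : ℝ≥0) * s = c := by
    push_cast
    rw [hs, mul_div_cancel₀]
    positivity
  have h4 : α c = (α s) ^ (2 ^ k) := by
    rw [← hcs]
    exact alpha_nsmul α h0 hadd s (2 ^ k)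
  rw [h4]
  calc (0:ℝ) < ((1:ℝ)/2) ^ (2 ^ k) := by positivity
    _ ≤ (α s i i) ^ (2 ^ k) := by
        apply pow_le_pow_left₀ (by norm_num)
        exact (hδp s hsδ).le
    _ ≤ ((α s) ^ (2 ^ k)) i i := stoch_diag_pow (hstoch s) i (2 ^ k)

include hcont h0 hadd hstoch in
theorem pi_exists : ∃ Pi : Matrix n n ℝ,
    Tendsto (fun k : ℕ => α ((k : ℝ≥0))) atTop (𝓝 Pi) ∧
    (∀ c : ℝ≥0, α c * Pi = Pi) ∧ (∀ c : ℝ≥0, Pi * α c = Pi) ∧ (Pi * Pi = Pi) := by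
  obtain ⟨Pi, hPi⟩ := pow_tendsto (hstoch 1) (fun i => alpha_diag_pos α hcont h0 hadd hstoch 1 i)
  have hone : ∀ k : ℕ, α ((k : ℝ≥0)) = (α 1) ^ k := by
    intro k
    rw [← alpha_nsmul α h0 hadd 1 k, mul_one]
  have hPik : Tendsto (fun k : ℕ => α ((k : ℝ≥0))) atTop (𝓝 Pi) := by
    simpa only [hone] using hPi
  -- rational invariance
  have hrat : ∀ (p m : ℕ), α ((p : ℝ≥0) * ((m+1 : ℕ) : ℝ≥0)⁻¹) * Pi = Pi := by
    intro p m
    set c0 : ℝ≥0 := ((m+1 : ℕ) : ℝ≥0)⁻¹ with hc0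
    have hm0 : ((m+1 : ℕ) : ℝ≥0) ≠ 0 := by positivity
    obtain ⟨Pi', hPi'⟩ := pow_tendsto (hstoch c0)
      (fun i => alpha_diag_pos α hcont h0 hadd hstoch c0 i)
    have hR : ∀ j : ℕ, (α c0) ^ j = α ((j : ℝ≥0) * c0) :=
      fun j => (alpha_nsmul α h0 hadd c0 j).symm
    have hsub : Tendsto (fun k : ℕ => (α c0) ^ (k * (m+1))) atTop (𝓝 Pi') := by
      refine hPi'.comp ?_
      refine Filter.tendsto_atTop_atTop.mpr fun b => ⟨b, fun a ha => ?_⟩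
      calc b ≤ a := ha
        _ ≤ a * (m+1) := Nat.le_mul_of_pos_right a (by omega)
    have heqk : ∀ k : ℕ, (α c0) ^ (k * (m+1)) = α ((k : ℝ≥0)) := by
      intro k
      rw [hR]
      congr 1
      rw [Nat.cast_mul, mul_assoc, hc0, mul_inv_cancel₀ hm0, mul_one]
    have h5 : Tendsto (fun k : ℕ => α ((k : ℝ≥0))) atTop (𝓝 Pi') := by
      simpa only [heqk] using hsub
    have hPP : Pi' = Pi := tendsto_nhds_unique h5 hPik
    -- α (p * c0) * Pi' = Pi'
    have h6 : Tendsto (fun k : ℕ => (α c0) ^ p * (α c0) ^ k) atTop (𝓝 ((α c0) ^ p * Pi')) :=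
      hPi'.const_mul _
    have h7 : Tendsto (fun k : ℕ => (α c0) ^ p * (α c0) ^ k) atTop (𝓝 Pi') := by
      have h8 : (fun k : ℕ => (α c0) ^ p * (α c0) ^ k) = fun k : ℕ => (α c0) ^ (k + p) := by
        funext k
        rw [pow_add, pow_mul_comm]
      rw [h8]
      exact hPi'.comp (tendsto_add_atTop_nat p)
    have h9 : (α c0) ^ p * Pi' = Pi' := tendsto_nhds_unique h6 h7
    rw [← hR p, ← hPP]
    exact h9
  have hsmul : ∀ c : ℝ≥0, α c * Pi = Pi := by
    intro c
    set cm : ℕ → ℝ≥0 := fun m => ((Nat.ceil (c * ((m+1 : ℕ) : ℝ≥0)) : ℕ) : ℝ≥0) * ((m+1 : ℕ) : ℝ≥0)⁻¹ with hcm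
    have hm0 : ∀ m : ℕ, (0:ℝ≥0) < ((m+1 : ℕ) : ℝ≥0) := fun m => by positivity
    have hup : ∀ m, c ≤ cm m := by
      intro m
      simp only [hcm]
      rw [← div_eq_mul_inv, le_div_iff₀ (hm0 m)]
      exact Nat.le_ceil _
    have hlow : ∀ m, cm m ≤ c + ((m+1 : ℕ) : ℝ≥0)⁻¹ := by
      intro m
      simp only [hcm]
      rw [← div_eq_mul_inv, div_le_iff₀ (hm0 m)]
      have h1 : ((Nat.ceil (c * ((m+1 : ℕ) : ℝ≥0)) : ℕ) : ℝ≥0) < c * ((m+1 : ℕ) : ℝ≥0) + 1 :=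
        Nat.ceil_lt_add_one zero_le
      calc ((Nat.ceil (c * ((m+1 : ℕ) : ℝ≥0)) : ℕ) : ℝ≥0) ≤ c * ((m+1 : ℕ) : ℝ≥0) + 1 := h1.le
        _ = (c + ((m+1 : ℕ) : ℝ≥0)⁻¹) * ((m+1 : ℕ) : ℝ≥0) := by
            rw [add_mul, inv_mul_cancel₀ (hm0 m).ne']
    have hten : Tendsto cm atTop (𝓝 c) := by
      have hz : Tendsto (fun m : ℕ => ((m+1 : ℕ) : ℝ≥0)⁻¹) atTop (𝓝 0) := by
        rw [← NNReal.tendsto_coe]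
        have := tendsto_one_div_add_atTop_nhds_zero_nat (𝕜 := ℝ)
        simpa [one_div] using this
      have hup' : Tendsto (fun m : ℕ => c + ((m+1 : ℕ) : ℝ≥0)⁻¹) atTop (𝓝 c) := by
        have := hz.const_add c
        simpa using this
      exact tendsto_of_tendsto_of_tendsto_of_le_of_le tendsto_const_nhds hup' hup hlow
    have h10 : Tendsto (fun m : ℕ => α (cm m) * Pi) atTop (𝓝 (α c * Pi)) :=
      (((hcont.tendsto c).comp hten).mul_const Pi)
    have h11 : ∀ m, α (cm m) * Pi = Pi := fun m => hrat _ m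
    have h12 : Tendsto (fun m : ℕ => α (cm m) * Pi) atTop (𝓝 Pi) := by
      simp only [h11]
      exact tendsto_const_nhds
    exact tendsto_nhds_unique h10 h12
  have hmulr : ∀ c : ℝ≥0, Pi * α c = Pi := by
    intro c
    have h13 : Tendsto (fun k : ℕ => α ((k : ℝ≥0)) * α c) atTop (𝓝 (Pi * α c)) :=
      hPik.mul_const _
    have h14 : ∀ k : ℕ, α ((k : ℝ≥0)) * α c = α c * α ((k : ℝ≥0)) := by
      intro k
      rw [← hadd, ← hadd, add_comm]
    have h15 : Tendsto (fun k : ℕ => α ((k : ℝ≥0)) * α c) atTop (𝓝 (α c * Pi)) := by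
      simp only [h14]
      exact hPik.const_mul _
    rw [hsmul c] at h15
    exact tendsto_nhds_unique h13 h15
  have hidem : Pi * Pi = Pi := by
    have h16 : Tendsto (fun k : ℕ => Pi * α ((k : ℝ≥0))) atTop (𝓝 (Pi * Pi)) :=
      hPik.const_mul _
    have h17 : Tendsto (fun k : ℕ => Pi * α ((k : ℝ≥0))) atTop (𝓝 Pi) := by
      simp only [hmulr]
      exact tendsto_const_nhds
    exact tendsto_nhds_unique h16 h17
  exact ⟨Pi, hPik, hsmul, hmulr, hidem⟩

include hcont h0 hadd hstoch in
theorem alpha_tendsto (Pi : Matrix n n ℝ)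
    (hPik : Tendsto (fun k : ℕ => α ((k : ℝ≥0))) atTop (𝓝 Pi))
    (hsmul : ∀ c : ℝ≥0, α c * Pi = Pi) :
    Tendsto α atTop (𝓝 Pi) := by
  have he : ∀ m j : n, Tendsto (fun k : ℕ => α ((k : ℝ≥0)) m j) atTop (𝓝 (Pi m j)) :=
    fun m j => tendsto_pi_nhds.mp (tendsto_pi_nhds.mp hPik m) j
  apply tendsto_pi_nhds.mpr
  intro i
  apply tendsto_pi_nhds.mpr
  intro j
  set h : ℕ → ℝ := fun k => ∑ m, |α ((k : ℝ≥0)) m j - Pi m j| with hh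
  have hh0 : Tendsto h atTop (𝓝 0) := by
    have : Tendsto h atTop (𝓝 (∑ m : n, (0:ℝ))) := by
      apply tendsto_finset_sum
      intro m _
      have := ((he m j).sub (tendsto_const_nhds (x := Pi m j))).abs
      simpa using this
    simpa using this
  have hbound : ∀ t : ℝ≥0, |α t i j - Pi i j| ≤ h (Nat.floor t) := by
    intro t
    set k := Nat.floor t with hk
    have hkt : ((k : ℝ≥0)) ≤ t := Nat.floor_le zero_le
    set s : ℝ≥0 := t - (k : ℝ≥0) with hs
    have hts : s + (k : ℝ≥0) = t := tsub_add_cancel_of_le hkt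
    have hα : α t = α s * α ((k : ℝ≥0)) := by rw [← hts, hadd]
    have hPiq : Pi i j = (α s * Pi) i j := by rw [hsmul s]
    rw [hα, hPiq]
    have hdiff : (α s * α ((k : ℝ≥0))) i j - (α s * Pi) i j
        = ∑ m, α s i m * (α ((k : ℝ≥0)) m j - Pi m j) := by
      simp only [Matrix.mul_apply]
      rw [← Finset.sum_sub_distrib]
      refine Finset.sum_congr rfl fun m _ => ?_
      ring
    rw [hdiff]
    calc |∑ m, α s i m * (α ((k : ℝ≥0)) m j - Pi m j)|
        ≤ ∑ m, |α s i m * (α ((k : ℝ≥0)) m j - Pi m j)| := Finset.abs_sum_le_sum_abs _ _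
      _ ≤ ∑ m, |α ((k : ℝ≥0)) m j - Pi m j| := by
          refine Finset.sum_le_sum fun m _ => ?_
          rw [abs_mul, abs_of_nonneg ((hstoch s).1 i m)]
          exact mul_le_of_le_one_left (abs_nonneg _) (stoch_entry_le_one (hstoch s) i m)
  have hcomp : Tendsto (fun t : ℝ≥0 => h (Nat.floor t)) atTop (𝓝 0) :=
    hh0.comp tendsto_nat_floor_atTop
  have hz : Tendsto (fun t : ℝ≥0 => α t i j - Pi i j) atTop (𝓝 0) :=
    squeeze_zero_norm hbound hcomp
  have := hz.add (tendsto_const_nhds (x := Pi i j))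
  simpa using this

end Semigroup

end MarkovAux

theorem markov_semigroup_extends_to_infty
    {n : Type*} [Fintype n] [DecidableEq n] [Nonempty n]
    (α : ℝ≥0 → Matrix n n ℝ)
    (hcont : Continuous α) (h0 : α 0 = 1)
    (hadd : ∀ s t : ℝ≥0, α (s + t) = α s * α t)
    (hstoch : ∀ t : ℝ≥0, IsStochastic (α t)) :
    (∃! β : ℝ≥0∞ → Matrix n n ℝ, Continuous β ∧ ∀ t : ℝ≥0, β (↑t) = α t) ∧
      ∀ β : ℝ≥0∞ → Matrix n n ℝ, Continuous β → (∀ t : ℝ≥0, β (↑t) = α t) →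
        (∀ x y : ℝ≥0∞, β (x + y) = β x * β y) ∧ β 0 = 1 := by
  classical
  obtain ⟨Pi, hPik, hsmul, hmulr, hidem⟩ := MarkovAux.pi_exists α hcont h0 hadd hstoch
  have hten : Tendsto α atTop (𝓝 Pi) :=
    MarkovAux.alpha_tendsto α hcont h0 hadd hstoch Pi hPik hsmul
  set β₀ : ℝ≥0∞ → Matrix n n ℝ := fun x => if x = ⊤ then Pi else α x.toNNReal with hβ₀
  have htop : β₀ ⊤ = Pi := by simp [hβ₀]
  have hext : ∀ t : ℝ≥0, β₀ ↑t = α t := by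
    intro t
    simp [hβ₀, ENNReal.coe_ne_top]
  have hcont₀ : Continuous β₀ := by
    rw [continuous_iff_continuousAt]
    intro x
    by_cases hx : x = ⊤
    · subst hx
      rw [ContinuousAt, htop]
      intro U hU
      rw [Filter.mem_map]
      obtain ⟨K, hK⟩ := mem_atTop_sets.mp (hten hU)
      refine mem_of_superset (Ioi_mem_nhds (ENNReal.coe_lt_top (r := K))) ?_
      intro y hy
      by_cases hytop : y = ⊤
      · subst hytop
        simpa [htop] using mem_of_mem_nhds hU
      · have h1 : K ≤ y.toNNReal := by
          have h2 : (K : ℝ≥0∞) < (y.toNNReal : ℝ≥0∞) := by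
            rwa [ENNReal.coe_toNNReal hytop]
          exact_mod_cast h2.le
        have h3 : β₀ y = α y.toNNReal := by simp [hβ₀, hytop]
        simp only [Set.mem_preimage, h3]
        exact hK _ h1
    · have h1 : ContinuousAt (fun y : ℝ≥0∞ => α y.toNNReal) x :=
        (hcont.continuousAt).comp (ENNReal.tendsto_toNNReal hx)
      apply h1.congr
      have h2 : ∀ᶠ y in 𝓝 x, y ≠ ⊤ := by
        have : IsOpen {y : ℝ≥0∞ | y ≠ ⊤} := isOpen_ne
        exact this.mem_nhds hx
      filter_upwards [h2] with y hy
      simp [hβ₀, hy]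
  have huniq : ∀ β : ℝ≥0∞ → Matrix n n ℝ, Continuous β → (∀ t : ℝ≥0, β ↑t = α t) → β = β₀ := by
    intro β hc he
    funext x
    by_cases hx : x = ⊤
    · subst hx
      have hseq : Tendsto (fun k : ℕ => ((k : ℝ≥0) : ℝ≥0∞)) atTop (𝓝 ⊤) := by
        have := ENNReal.tendsto_nat_nhds_top
        apply this.congr
        intro k
        simp
      have l1 : Tendsto (fun k : ℕ => β ((k : ℝ≥0) : ℝ≥0∞)) atTop (𝓝 (β ⊤)) :=
        (hc.tendsto ⊤).comp hseq
      have l2 : Tendsto (fun k : ℕ => β₀ ((k : ℝ≥0) : ℝ≥0∞)) atTop (𝓝 (β₀ ⊤)) :=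
        (hcont₀.tendsto ⊤).comp hseq
      have l3 : (fun k : ℕ => β ((k : ℝ≥0) : ℝ≥0∞)) = fun k : ℕ => β₀ ((k : ℝ≥0) : ℝ≥0∞) :=
        funext fun k => by rw [he, hext]
      rw [l3] at l1
      exact tendsto_nhds_unique l1 l2
    · obtain ⟨t, rfl⟩ : ∃ t : ℝ≥0, x = (t : ℝ≥0∞) := ⟨x.toNNReal, (ENNReal.coe_toNNReal hx).symm⟩
      rw [he, hext]
  have haddβ : ∀ x y : ℝ≥0∞, β₀ (x + y) = β₀ x * β₀ y := by
    intro x y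
    by_cases hx : x = ⊤
    · subst hx
      rw [top_add, htop]
      by_cases hy : y = ⊤
      · subst hy
        rw [htop]
        exact hidem.symm
      · obtain ⟨b, rfl⟩ : ∃ b : ℝ≥0, y = (b : ℝ≥0∞) := ⟨y.toNNReal, (ENNReal.coe_toNNReal hy).symm⟩
        rw [hext]
        exact (hmulr b).symm
    · by_cases hy : y = ⊤
      · subst hy
        rw [add_top, htop]
        obtain ⟨a, rfl⟩ : ∃ a : ℝ≥0, x = (a : ℝ≥0∞) := ⟨x.toNNReal, (ENNReal.coe_toNNReal hx).symm⟩
        rw [hext]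
        exact (hsmul a).symm
      · obtain ⟨a, rfl⟩ : ∃ a : ℝ≥0, x = (a : ℝ≥0∞) := ⟨x.toNNReal, (ENNReal.coe_toNNReal hx).symm⟩
        obtain ⟨b, rfl⟩ : ∃ b : ℝ≥0, y = (b : ℝ≥0∞) := ⟨y.toNNReal, (ENNReal.coe_toNNReal hy).symm⟩
        rw [← ENNReal.coe_add, hext, hext, hext, hadd]
  have hzero : β₀ 0 = 1 := by
    have : β₀ ((0 : ℝ≥0) : ℝ≥0∞) = α 0 := hext 0
    simpa [h0] using this
  constructor
  · exact ⟨β₀, ⟨hcont₀, hext⟩, fun β hβ => huniq β hβ.1 hβ.2⟩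
  · intro β hc he
    have hβ : β = β₀ := huniq β hc he
    subst hβ
    exact ⟨haddβ, hzero⟩
end

section
/- Let n be a nonempty finite type and α : ℝ≥0 → Matrix n n ℝ a Markov semigroup. Then there exists a probability distribution f : n → ℝ (i.e., f i ≥ 0 for all i and ∑ i, f i = 1) such that (α t).mulVec f = f for every t ∈ ℝ≥0. -/
open scoped NNReal
open Filter Topology Matrix

/-- Every stochastic matrix has a fixed probability vector. -/
lemma IsStochastic.exists_fixed {n : Type*} [Fintype n] [DecidableEq n] [Nonempty n]
    {A : Matrix n n ℝ} (hA : IsStochastic A) :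
    ∃ f ∈ stdSimplex ℝ n, A.mulVec f = f := by
  have hdetT : (A - 1)ᵀ.det = 0 := by
    rw [← Matrix.exists_mulVec_eq_zero_iff]
    refine ⟨fun _ => 1, ?_, ?_⟩
    · intro h
      have := congrFun h (Classical.arbitrary n)
      simp at this
    · funext j
      simp [Matrix.mulVec, dotProduct, Matrix.transpose_apply, Matrix.sub_apply,
        Matrix.one_apply, Finset.sum_sub_distrib, hA.2 j]
  have hdet : (A - 1).det = 0 := by rwa [Matrix.det_transpose] at hdetT
  obtain ⟨v, hv0, hv⟩ := (Matrix.exists_mulVec_eq_zero_iff).2 hdet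
  have hAv : A.mulVec v = v := by
    rw [Matrix.sub_mulVec, Matrix.one_mulVec, sub_eq_zero] at hv
    exact hv
  set g : n → ℝ := fun i => |v i| with hg
  have hle : ∀ i, g i ≤ A.mulVec g i := by
    intro i
    have hvi : v i = ∑ j, A i j * v j := by
      conv_lhs => rw [← hAv]
      rfl
    calc g i = |∑ j, A i j * v j| := by rw [hg]; simp only; rw [← hvi]
      _ ≤ ∑ j, |A i j * v j| := Finset.abs_sum_le_sum_abs _ _
      _ = ∑ j, A i j * g j := by
          refine Finset.sum_congr rfl fun j _ => ?_
          rw [abs_mul, abs_of_nonneg (hA.1 i j)]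
      _ = A.mulVec g i := rfl
  have hsum : ∑ i, A.mulVec g i = ∑ i, g i := by
    simp only [Matrix.mulVec, dotProduct]
    rw [Finset.sum_comm]
    refine Finset.sum_congr rfl fun j _ => ?_
    rw [← Finset.sum_mul, hA.2 j, one_mul]
  have hAg : A.mulVec g = g := by
    funext i
    exact ((Finset.sum_eq_sum_iff_of_le (fun i _ => hle i)).1 hsum.symm i
      (Finset.mem_univ i)).symm
  have hS : 0 < ∑ i, g i := by
    rcases Function.ne_iff.1 hv0 with ⟨i, hi⟩
    exact Finset.sum_pos' (fun i _ => abs_nonneg _) ⟨i, Finset.mem_univ i, abs_pos.2 hi⟩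
  refine ⟨(∑ i, g i)⁻¹ • g, ⟨fun i => ?_, ?_⟩, ?_⟩
  · exact mul_nonneg (inv_nonneg.2 hS.le) (abs_nonneg _)
  · simp only [Pi.smul_apply, smul_eq_mul, ← Finset.mul_sum]
    field_simp
  · rw [Matrix.mulVec_smul, hAg]

theorem markov_semigroup_has_equilibrium
    {n : Type*} [Fintype n] [DecidableEq n] [Nonempty n]
    (α : ℝ≥0 → Matrix n n ℝ)
    (hcont : Continuous α) (h0 : α 0 = 1)
    (hadd : ∀ s t : ℝ≥0, α (s + t) = α s * α t)
    (hstoch : ∀ t : ℝ≥0, IsStochastic (α t)) :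
    ∃ f : n → ℝ, (∀ i, 0 ≤ f i) ∧ (∑ i, f i = 1) ∧
      ∀ t : ℝ≥0, (α t).mulVec f = f := by
  -- semigroup powers
  have hpowα : ∀ (s : ℝ≥0) (m : ℕ), α ((m : ℝ≥0) * s) = (α s) ^ m := by
    intro s m
    induction m with
    | zero => simpa using h0
    | succ k ih =>
      have h : ((k + 1 : ℕ) : ℝ≥0) * s = (k : ℝ≥0) * s + s := by push_cast; ring
      rw [h, hadd, ih, pow_succ]
  -- the nested family of fixed-point sets
  set F : ℕ → Set (n → ℝ) :=
    fun k => {f | f ∈ stdSimplex ℝ n ∧ (α ((1/2 : ℝ≥0) ^ k)).mulVec f = f} with hF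
  have hsub : ∀ k, F (k + 1) ⊆ F k := by
    intro k f hf
    refine ⟨hf.1, ?_⟩
    have h : ((1/2 : ℝ≥0) ^ k) = (1/2 : ℝ≥0) ^ (k+1) + (1/2 : ℝ≥0) ^ (k+1) := by
      rw [← two_mul, pow_succ']
      rw [← mul_assoc, mul_one_div_cancel two_ne_zero, one_mul]
    rw [h, hadd, ← Matrix.mulVec_mulVec, hf.2, hf.2]
  have hne : ∀ k, (F k).Nonempty := by
    intro k
    obtain ⟨f, hf1, hf2⟩ := (hstoch ((1/2 : ℝ≥0) ^ k)).exists_fixed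
    exact ⟨f, hf1, hf2⟩
  have hclosed : ∀ k, IsClosed (F k) := by
    intro k
    exact (isClosed_stdSimplex ℝ n).inter
      (isClosed_eq (α ((1/2 : ℝ≥0) ^ k)).mulVecLin.continuous_of_finiteDimensional
        continuous_id)
  have hcpt : IsCompact (F 0) :=
    IsCompact.of_isClosed_subset (isCompact_stdSimplex ℝ n) (hclosed 0) fun f hf => hf.1
  obtain ⟨f, hf⟩ :=
    IsCompact.nonempty_iInter_of_sequence_nonempty_isCompact_isClosed F hsub hne hcpt hclosed
  simp only [Set.mem_iInter] at hf
  have hfs : f ∈ stdSimplex ℝ n := (hf 0).1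
  -- f is fixed by all powers of each α ((1/2)^k)
  have hfixpow : ∀ (M : Matrix n n ℝ), M.mulVec f = f → ∀ m : ℕ, (M ^ m).mulVec f = f := by
    intro M hM m
    induction m with
    | zero => simp
    | succ k ih => rw [pow_succ, ← Matrix.mulVec_mulVec, hM, ih]
  have hdyadic : ∀ (m k : ℕ), (α ((m : ℝ≥0) * (1/2 : ℝ≥0) ^ k)).mulVec f = f := by
    intro m k
    rw [hpowα]
    exact hfixpow _ (hf k).2 m
  refine ⟨f, hfs.1, hfs.2, fun t => ?_⟩
  -- continuity of s ↦ (α s).mulVec f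
  have hcm : Continuous fun s : ℝ≥0 => (α s).mulVec f := by
    refine continuous_pi fun i => ?_
    simp only [Matrix.mulVec, dotProduct]
    refine continuous_finset_sum _ fun j _ => Continuous.mul ?_ continuous_const
    exact (continuous_apply j).comp ((continuous_apply i).comp hcont)
  -- dyadic approximation of t
  set q : ℕ → ℝ≥0 := fun k => (⌊(t : ℝ) * 2 ^ k⌋₊ : ℝ≥0) * (1/2 : ℝ≥0) ^ k with hq
  have hqt : Tendsto q atTop (𝓝 t) := by
    rw [← NNReal.tendsto_coe]
    simp only [hq]
    push_cast
    have hlow : Tendsto (fun k : ℕ => (t : ℝ) - (1/2 : ℝ) ^ k) atTop (𝓝 t) := by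
      have := tendsto_pow_atTop_nhds_zero_of_lt_one (by norm_num : (0:ℝ) ≤ 1/2) (by norm_num)
      simpa using (tendsto_const_nhds.sub this)
    have hpow : ∀ k : ℕ, (2:ℝ) ^ k * (1/2:ℝ) ^ k = 1 := fun k => by
      rw [← mul_pow]; norm_num
    refine tendsto_of_tendsto_of_tendsto_of_le_of_le hlow tendsto_const_nhds ?_ ?_
    · intro k
      have h1 : (t : ℝ) * 2 ^ k < ⌊(t:ℝ) * 2 ^ k⌋₊ + 1 := Nat.lt_floor_add_one _
      have h2 : (0:ℝ) < (1/2 : ℝ) ^ k := by positivity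
      have h3 := mul_le_mul_of_nonneg_right
        (le_of_lt (by linarith : (t:ℝ) * 2^k - 1 < (⌊(t:ℝ) * 2 ^ k⌋₊:ℝ))) h2.le
      have e : ((t:ℝ) * 2^k - 1) * (1/2)^k = (t:ℝ) * 1 - (1/2)^k := by
        rw [sub_mul, mul_assoc, hpow k, one_mul]
      simp only [mul_one] at e
      linarith
    · intro k
      have h1 : (⌊(t:ℝ) * 2 ^ k⌋₊ : ℝ) ≤ (t:ℝ) * 2 ^ k := Nat.floor_le (by positivity)
      have h2 : (0:ℝ) ≤ (1/2 : ℝ) ^ k := by positivity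
      have h3 := mul_le_mul_of_nonneg_right h1 h2
      have e : (t:ℝ) * 2^k * (1/2)^k = t := by rw [mul_assoc, hpow k, mul_one]
      linarith
  have h1 : Tendsto (fun k => (α (q k)).mulVec f) atTop (𝓝 ((α t).mulVec f)) :=
    (hcm.tendsto t).comp hqt
  have h2 : Tendsto (fun k => (α (q k)).mulVec f) atTop (𝓝 f) := by
    have : (fun k => (α (q k)).mulVec f) = fun _ => f := by
      funext k
      exact hdyadic _ k
    rw [this]
    exact tendsto_const_nhds
  exact tendsto_nhds_unique h1 h2
end

section
/- Let n be a nonempty finite type, α : ℝ≥0 → Matrix n n ℝ a Markov semigroup, and P : Matrix n n ℝ the matrix to which α t converges as t → ∞. Then: (1) for every probability distribution f : n → ℝ, the vector P.mulVec f is a probability distribution and is an equilibrium, i.e. (α t).mulVec (P.mulVec f) = P.mulVec f for all t ∈ ℝ≥0; and (2) if f : n → ℝ satisfies (α t).mulVec f = f for all t ∈ ℝ≥0, then P.mulVec f = f. Hence P maps the set of probability distributions onto the set of equilibrium probability distributions. -/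
open Filter Topology
open scoped NNReal

theorem markov_semigroup_limit_maps_onto_equilibria
    {n : Type*} [Fintype n] [DecidableEq n] [Nonempty n]
    (α : ℝ≥0 → Matrix n n ℝ)
    (hcont : Continuous α) (h0 : α 0 = 1)
    (hadd : ∀ s t : ℝ≥0, α (s + t) = α s * α t)
    (hstoch : ∀ t : ℝ≥0, IsStochastic (α t))
    (P : Matrix n n ℝ) (hP : Tendsto α atTop (𝓝 P)) :
    (∀ f : n → ℝ, (∀ i, 0 ≤ f i) → (∑ i, f i = 1) →
        (∀ i, 0 ≤ P.mulVec f i) ∧ (∑ i, P.mulVec f i = 1) ∧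
          ∀ t : ℝ≥0, (α t).mulVec (P.mulVec f) = P.mulVec f) ∧
      ∀ f : n → ℝ, (∀ t : ℝ≥0, (α t).mulVec f = f) → P.mulVec f = f := by
  have hentry : ∀ i j, Tendsto (fun t => α t i j) atTop (𝓝 (P i j)) := fun i j =>
    tendsto_pi_nhds.1 (tendsto_pi_nhds.1 hP i) j
  have hPnn : ∀ i j, 0 ≤ P i j := fun i j =>
    le_of_tendsto_of_tendsto' tendsto_const_nhds (hentry i j) (fun t => (hstoch t).1 i j)
  have hPsum : ∀ j, ∑ i, P i j = 1 := by
    intro j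
    have h1 : Tendsto (fun t => ∑ i, α t i j) atTop (𝓝 (∑ i, P i j)) :=
      tendsto_finset_sum _ fun i _ => hentry i j
    have h2 : Tendsto (fun t : ℝ≥0 => ∑ i, α t i j) atTop (𝓝 1) := by
      simpa [(fun t => (hstoch t).2 j)] using tendsto_const_nhds (α := ℝ≥0) (a := (1:ℝ))
    exact tendsto_nhds_unique h1 h2
  have hαP : ∀ t, α t * P = P := by
    intro t
    have h1 : Tendsto (fun s => α (t + s)) atTop (𝓝 P) :=
      hP.comp (tendsto_atTop_mono (fun s : ℝ≥0 => le_add_self) tendsto_id)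
    have h2 : Tendsto (fun s => α t * α s) atTop (𝓝 (α t * P)) := hP.const_mul _
    have h1' : Tendsto (fun s => α t * α s) atTop (𝓝 P) := by
      simpa [hadd] using h1
    exact tendsto_nhds_unique h2 h1'
  constructor
  · intro f hf hsum
    refine ⟨?_, ?_, ?_⟩
    · intro i
      exact Finset.sum_nonneg fun j _ => mul_nonneg (hPnn i j) (hf j)
    · calc ∑ i, P.mulVec f i = ∑ i, ∑ j, P i j * f j := rfl
        _ = ∑ j, ∑ i, P i j * f j := Finset.sum_comm
        _ = ∑ j, (∑ i, P i j) * f j := by simp [Finset.sum_mul]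
        _ = 1 := by simp [hPsum, hsum]
    · intro t
      rw [Matrix.mulVec_mulVec, hαP t]
  · intro f hf
    have h1 : Tendsto (fun t => (α t).mulVec f) atTop (𝓝 (P.mulVec f)) := by
      rw [tendsto_pi_nhds]
      intro i
      have : Tendsto (fun t => ∑ j, α t i j * f j) atTop (𝓝 (∑ j, P i j * f j)) :=
        tendsto_finset_sum _ fun j _ => (hentry i j).mul_const _
      simpa [Matrix.mulVec, dotProduct] using this
    have h2 : Tendsto (fun t : ℝ≥0 => (α t).mulVec f) atTop (𝓝 f) := by
      simpa [hf] using tendsto_const_nhds (α := ℝ≥0) (a := f)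
    exact tendsto_nhds_unique h1 h2
end
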